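/- arXiv:1706.08623 — 7 statements merged into one kernel-verified Lean document; each statement's English description precedes it below -/
import Mathlib

section
/- The function I(φ, θ) = b² cos²θ − c² sin²φ sin²θ is a first integral of the static elliptic billiard map B_s: for every (φ, θ) in the domain of B_s, if (φ₁, θ₁) = B_s(φ, θ) then I(φ₁, θ₁) = I(φ, θ). (Since I is π-periodic in both φ and θ, the identification modulo π is immaterial here.) -/
private lemma sign_shift (x : ℝ) (k : ℤ) : ∃ e : ℝ, e^2 = 1 ∧
    Real.cos (x + k * Real.pi) = e * Real.cos x ∧
    Real.sin (x + k * Real.pi) = e * Real.sin x := by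
  refine ⟨Real.cos (k * Real.pi), ?_, ?_, ?_⟩
  · have h := Real.sin_sq_add_cos_sq (k * Real.pi)
    rw [Real.sin_int_mul_pi] at h
    nlinarith [h]
  · rw [Real.cos_add, Real.sin_int_mul_pi]; ring
  · rw [Real.sin_add, Real.sin_int_mul_pi]; ring

private lemma cos_two_arctan (x : ℝ) : Real.cos (2 * Real.arctan x) = (1 - x^2)/(1 + x^2) := by
  have h0 : (0:ℝ) < 1 + x^2 := by positivity
  have hs : Real.sqrt (1 + x^2) ^ 2 = 1 + x^2 := Real.sq_sqrt (by positivity)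
  have hne : Real.sqrt (1 + x^2) ≠ 0 := by positivity
  rw [Real.cos_two_mul, Real.cos_arctan]
  field_simp
  linear_combination (-2) * hs

private lemma sin_two_arctan (x : ℝ) : Real.sin (2 * Real.arctan x) = 2*x/(1 + x^2) := by
  have h0 : (0:ℝ) < 1 + x^2 := by positivity
  have hs : Real.sqrt (1 + x^2) ^ 2 = 1 + x^2 := Real.sq_sqrt (by positivity)
  have hne : Real.sqrt (1 + x^2) ≠ 0 := by positivity
  rw [Real.sin_two_mul, Real.sin_arctan, Real.cos_arctan]
  field_simp
  linear_combination (-x) * hs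

private lemma div_identity (b2 c2 M2 M3 S1 AA BB K R : ℝ) (hAB : AA*BB ≠ 0) (hK2 : K^2 ≠ 0)
    (key : b2*M2^2*K^2 - c2*S1^2*M3^2 = R*(AA*BB*K^2)) :
    b2*(M2^2/(AA*BB)) - c2*(S1^2/K^2)*(M3^2/(AA*BB)) = R := by
  have hA : AA ≠ 0 := left_ne_zero_of_mul hAB
  have hB : BB ≠ 0 := right_ne_zero_of_mul hAB
  have hK : K ≠ 0 := fun h => hK2 (by rw [h]; ring)
  field_simp
  linear_combination key

private lemma conv1 (a b sp cp st ct C1 S1 : ℝ) (ha' : a ≠ 0) (hsp : sp ≠ 0) (hS1 : S1 ≠ 0) :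
    ((1 + (b*cp/(a*sp))*(b*C1/(a*S1)))*ct + ((b*cp/(a*sp)) - (b*C1/(a*S1)))*st)^2
      / ((1+(b*cp/(a*sp))^2)*(1+(b*C1/(a*S1))^2))
    = ((a^2*sp*S1 + b^2*cp*C1)*ct + a*b*(cp*S1 - sp*C1)*st)^2
      / ((a^2*sp^2 + b^2*cp^2)*(a^2*S1^2 + b^2*C1^2)) := by
  field_simp

private lemma conv2 (a b sp cp st ct C1 S1 : ℝ) (ha' : a ≠ 0) (hsp : sp ≠ 0) (hS1 : S1 ≠ 0) :
    (((b*cp/(a*sp)) - (b*C1/(a*S1)))*ct - (1 + (b*cp/(a*sp))*(b*C1/(a*S1)))*st)^2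
      / ((1+(b*cp/(a*sp))^2)*(1+(b*C1/(a*S1))^2))
    = (a*b*(cp*S1 - sp*C1)*ct - (a^2*sp*S1 + b^2*cp*C1)*st)^2
      / ((a^2*sp^2 + b^2*cp^2)*(a^2*S1^2 + b^2*C1^2)) := by
  field_simp

private lemma key_poly (a b sp cp st ct N D K C1 S1 : ℝ)
    (hp : sp^2 + cp^2 = 1)
    (hN : N = b*(a*sp*ct + b*cp*st))
    (hD : D = a*(b*cp*ct - a*sp*st))
    (hK : K = D^2 + N^2)
    (hC1 : C1 = (D^2-N^2)*cp + 2*N*D*sp)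
    (hS1 : S1 = 2*N*D*cp - (D^2-N^2)*sp) :
    b^2*((a^2*sp*S1 + b^2*cp*C1)*ct + a*b*(cp*S1 - sp*C1)*st)^2*K^2
      - (a^2-b^2)*S1^2*(a*b*(cp*S1 - sp*C1)*ct - (a^2*sp*S1 + b^2*cp*C1)*st)^2
      = (b^2*ct^2 - (a^2-b^2)*sp^2*st^2) * ((a^2*sp^2+b^2*cp^2)*(a^2*S1^2+b^2*C1^2)*K^2) := by
  subst hN hD hK hC1 hS1
  linear_combination (4*a*b^21*sp*cp^11*st^9*ct + 4*a^2*b^20*cp^12*st^8*ct^2 + 24*a^2*b^20*sp^2*cp^10*st^8*ct^2 - 4*a^2*b^20*sp^2*cp^10*st^10 + 28*a^3*b^19*sp*cp^11*st^7*ct^3 - 12*a^3*b^19*sp*cp^11*st^9*ct + 60*a^3*b^19*sp^3*cp^9*st^7*ct^3 - 16*a^3*b^19*sp^3*cp^9*st^9*ct + 8*a^4*b^18*cp^12*st^6*ct^4 - 4*a^4*b^18*cp^12*st^8*ct^2 + 72*a^4*b^18*sp^2*cp^10*st^6*ct^4 - 80*a^4*b^18*sp^2*cp^10*st^8*ct^2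 + 8*a^4*b^18*sp^2*cp^10*st^10 + 80*a^4*b^18*sp^4*cp^8*st^6*ct^4 - 12*a^4*b^18*sp^4*cp^8*st^8*ct^2 - 8*a^4*b^18*sp^4*cp^8*st^10 + 28*a^5*b^17*sp*cp^11*st^5*ct^5 - 60*a^5*b^17*sp*cp^11*st^7*ct^3 + 8*a^5*b^17*sp*cp^11*st^9*ct + 88*a^5*b^17*sp^3*cp^9*st^5*ct^5 - 180*a^5*b^17*sp^3*cp^9*st^7*ct^3 + 44*a^5*b^17*sp^3*cp^9*st^9*ct + 60*a^5*b^17*sp^5*cp^7*st^5*ct^5 + 40*a^5*b^17*sp^5*cp^7*st^7*ct^3 - 44*a^5*b^17*sp^5*cp^7*st^9*ct + 4*a^6*b^16*cp^12*st^4*ct^6 - 8*a^6*b^16*cp^12*st^6*ct^4 + 32*a^6*b^16*sp^2*cp^10*st^4*ct^6 - 172*a^6*b^16*sp^2*cp^10*st^6*ct^4 + 104*a^6*b^16*sp^2*cp^10*st^8*ct^2 - 4*a^6*b^16*sp^2*cp^10*st^10 + 52*a^6*b^16*sp^4*cp^8*st^4*ct^6 - 160*a^6*b^16*sp^4*cp^8*st^6*ct^4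 + 24*a^6*b^16*sp^4*cp^8*st^8*ct^2 + 8*a^6*b^16*sp^4*cp^8*st^10 + 24*a^6*b^16*sp^6*cp^6*st^4*ct^6 + 100*a^6*b^16*sp^6*cp^6*st^6*ct^4 - 96*a^6*b^16*sp^6*cp^6*st^8*ct^2 - 4*a^6*b^16*sp^6*cp^6*st^10 + 4*a^7*b^15*sp*cp^11*st^3*ct^7 - 52*a^7*b^15*sp*cp^11*st^5*ct^5 + 32*a^7*b^15*sp*cp^11*st^7*ct^3 + 12*a^7*b^15*sp^3*cp^9*st^3*ct^7 - 168*a^7*b^15*sp^3*cp^9*st^5*ct^5 + 240*a^7*b^15*sp^3*cp^9*st^7*ct^3 - 60*a^7*b^15*sp^3*cp^9*st^9*ct + 12*a^7*b^15*sp^5*cp^7*st^3*ct^7 - 20*a^7*b^15*sp^5*cp^7*st^5*ct^5 - 180*a^7*b^15*sp^5*cp^7*st^7*ct^3 + 92*a^7*b^15*sp^5*cp^7*st^9*ct + 4*a^7*b^15*sp^7*cp^5*st^3*ct^7 + 96*a^7*b^15*sp^7*cp^5*st^5*ct^5 - 100*a^7*b^15*sp^7*cp^5*st^7*ct^3 -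 24*a^7*b^15*sp^7*cp^5*st^9*ct - 4*a^8*b^14*cp^12*st^4*ct^6 - 48*a^8*b^14*sp^2*cp^10*st^4*ct^6 + 160*a^8*b^14*sp^2*cp^10*st^6*ct^4 - 48*a^8*b^14*sp^2*cp^10*st^8*ct^2 - 40*a^8*b^14*sp^4*cp^8*st^4*ct^6 + 80*a^8*b^14*sp^4*cp^8*st^6*ct^4 - 52*a^8*b^14*sp^4*cp^8*st^8*ct^2 + 8*a^8*b^14*sp^4*cp^8*st^10 + 48*a^8*b^14*sp^6*cp^6*st^4*ct^6 - 360*a^8*b^14*sp^6*cp^6*st^6*ct^4 + 256*a^8*b^14*sp^6*cp^6*st^8*ct^2 - 8*a^8*b^14*sp^6*cp^6*st^10 + 44*a^8*b^14*sp^8*cp^4*st^4*ct^6 - 40*a^8*b^14*sp^8*cp^4*st^6*ct^4 - 60*a^8*b^14*sp^8*cp^4*st^8*ct^2 - 4*a^9*b^13*sp*cp^11*st^3*ct^7 + 24*a^9*b^13*sp*cp^11*st^5*ct^5 - 4*a^9*b^13*sp^3*cp^9*st^3*ct^7 + 92*a^9*b^13*sp^3*cp^9*st^5*ct^5 - 200*a^9*b^13*sp^3*cp^9*st^7*ct^3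 + 32*a^9*b^13*sp^3*cp^9*st^9*ct + 12*a^9*b^13*sp^5*cp^7*st^3*ct^7 - 196*a^9*b^13*sp^5*cp^7*st^5*ct^5 + 300*a^9*b^13*sp^5*cp^7*st^7*ct^3 - 68*a^9*b^13*sp^5*cp^7*st^9*ct + 20*a^9*b^13*sp^7*cp^5*st^3*ct^7 - 252*a^9*b^13*sp^7*cp^5*st^5*ct^5 + 260*a^9*b^13*sp^7*cp^5*st^7*ct^3 + 4*a^9*b^13*sp^7*cp^5*st^9*ct + 8*a^9*b^13*sp^9*cp^3*st^3*ct^7 + 12*a^9*b^13*sp^9*cp^3*st^5*ct^5 - 80*a^9*b^13*sp^9*cp^3*st^7*ct^3 + 16*a^10*b^12*sp^2*cp^10*st^4*ct^6 - 60*a^10*b^12*sp^2*cp^10*st^6*ct^4 - 56*a^10*b^12*sp^4*cp^8*st^4*ct^6 + 40*a^10*b^12*sp^4*cp^8*st^6*ct^4 + 100*a^10*b^12*sp^4*cp^8*st^8*ct^2 - 8*a^10*b^12*sp^4*cp^8*st^10 - 144*a^10*b^12*sp^6*cp^6*st^4*ct^6 + 520*a^10*b^12*sp^6*cp^6*st^6*ct^4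 - 320*a^10*b^12*sp^6*cp^6*st^8*ct^2 + 24*a^10*b^12*sp^6*cp^6*st^10 - 56*a^10*b^12*sp^8*cp^4*st^4*ct^6 + 40*a^10*b^12*sp^8*cp^4*st^6*ct^4 + 100*a^10*b^12*sp^8*cp^4*st^8*ct^2 - 8*a^10*b^12*sp^8*cp^4*st^10 + 16*a^10*b^12*sp^10*cp^2*st^4*ct^6 - 60*a^10*b^12*sp^10*cp^2*st^6*ct^4 - 8*a^11*b^11*sp^3*cp^9*st^3*ct^7 - 12*a^11*b^11*sp^3*cp^9*st^5*ct^5 + 80*a^11*b^11*sp^3*cp^9*st^7*ct^3 - 20*a^11*b^11*sp^5*cp^7*st^3*ct^7 + 252*a^11*b^11*sp^5*cp^7*st^5*ct^5 - 260*a^11*b^11*sp^5*cp^7*st^7*ct^3 - 4*a^11*b^11*sp^5*cp^7*st^9*ct - 12*a^11*b^11*sp^7*cp^5*st^3*ct^7 + 196*a^11*b^11*sp^7*cp^5*st^5*ct^5 - 300*a^11*b^11*sp^7*cp^5*st^7*ct^3 + 68*a^11*b^11*sp^7*cp^5*st^9*ct + 4*a^11*b^11*sp^9*cp^3*st^3*ct^7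 - 92*a^11*b^11*sp^9*cp^3*st^5*ct^5 + 200*a^11*b^11*sp^9*cp^3*st^7*ct^3 - 32*a^11*b^11*sp^9*cp^3*st^9*ct + 4*a^11*b^11*sp^11*cp*st^3*ct^7 - 24*a^11*b^11*sp^11*cp*st^5*ct^5 + 44*a^12*b^10*sp^4*cp^8*st^4*ct^6 - 40*a^12*b^10*sp^4*cp^8*st^6*ct^4 - 60*a^12*b^10*sp^4*cp^8*st^8*ct^2 + 48*a^12*b^10*sp^6*cp^6*st^4*ct^6 - 360*a^12*b^10*sp^6*cp^6*st^6*ct^4 + 256*a^12*b^10*sp^6*cp^6*st^8*ct^2 - 8*a^12*b^10*sp^6*cp^6*st^10 - 40*a^12*b^10*sp^8*cp^4*st^4*ct^6 + 80*a^12*b^10*sp^8*cp^4*st^6*ct^4 - 52*a^12*b^10*sp^8*cp^4*st^8*ct^2 + 8*a^12*b^10*sp^8*cp^4*st^10 - 48*a^12*b^10*sp^10*cp^2*st^4*ct^6 + 160*a^12*b^10*sp^10*cp^2*st^6*ct^4 - 48*a^12*b^10*sp^10*cp^2*st^8*ct^2 - 4*a^12*b^10*sp^12*st^4*ct^6 -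 4*a^13*b^9*sp^5*cp^7*st^3*ct^7 - 96*a^13*b^9*sp^5*cp^7*st^5*ct^5 + 100*a^13*b^9*sp^5*cp^7*st^7*ct^3 + 24*a^13*b^9*sp^5*cp^7*st^9*ct - 12*a^13*b^9*sp^7*cp^5*st^3*ct^7 + 20*a^13*b^9*sp^7*cp^5*st^5*ct^5 + 180*a^13*b^9*sp^7*cp^5*st^7*ct^3 - 92*a^13*b^9*sp^7*cp^5*st^9*ct - 12*a^13*b^9*sp^9*cp^3*st^3*ct^7 + 168*a^13*b^9*sp^9*cp^3*st^5*ct^5 - 240*a^13*b^9*sp^9*cp^3*st^7*ct^3 + 60*a^13*b^9*sp^9*cp^3*st^9*ct - 4*a^13*b^9*sp^11*cp*st^3*ct^7 + 52*a^13*b^9*sp^11*cp*st^5*ct^5 - 32*a^13*b^9*sp^11*cp*st^7*ct^3 + 24*a^14*b^8*sp^6*cp^6*st^4*ct^6 + 100*a^14*b^8*sp^6*cp^6*st^6*ct^4 - 96*a^14*b^8*sp^6*cp^6*st^8*ct^2 - 4*a^14*b^8*sp^6*cp^6*st^10 + 52*a^14*b^8*sp^8*cp^4*st^4*ct^6 -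 160*a^14*b^8*sp^8*cp^4*st^6*ct^4 + 24*a^14*b^8*sp^8*cp^4*st^8*ct^2 + 8*a^14*b^8*sp^8*cp^4*st^10 + 32*a^14*b^8*sp^10*cp^2*st^4*ct^6 - 172*a^14*b^8*sp^10*cp^2*st^6*ct^4 + 104*a^14*b^8*sp^10*cp^2*st^8*ct^2 - 4*a^14*b^8*sp^10*cp^2*st^10 + 4*a^14*b^8*sp^12*st^4*ct^6 - 8*a^14*b^8*sp^12*st^6*ct^4 - 60*a^15*b^7*sp^7*cp^5*st^5*ct^5 - 40*a^15*b^7*sp^7*cp^5*st^7*ct^3 + 44*a^15*b^7*sp^7*cp^5*st^9*ct - 88*a^15*b^7*sp^9*cp^3*st^5*ct^5 + 180*a^15*b^7*sp^9*cp^3*st^7*ct^3 - 44*a^15*b^7*sp^9*cp^3*st^9*ct - 28*a^15*b^7*sp^11*cp*st^5*ct^5 + 60*a^15*b^7*sp^11*cp*st^7*ct^3 - 8*a^15*b^7*sp^11*cp*st^9*ct + 80*a^16*b^6*sp^8*cp^4*st^6*ct^4 - 12*a^16*b^6*sp^8*cp^4*st^8*ct^2 - 8*a^16*b^6*sp^8*cp^4*st^10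 + 72*a^16*b^6*sp^10*cp^2*st^6*ct^4 - 80*a^16*b^6*sp^10*cp^2*st^8*ct^2 + 8*a^16*b^6*sp^10*cp^2*st^10 + 8*a^16*b^6*sp^12*st^6*ct^4 - 4*a^16*b^6*sp^12*st^8*ct^2 - 60*a^17*b^5*sp^9*cp^3*st^7*ct^3 + 16*a^17*b^5*sp^9*cp^3*st^9*ct - 28*a^17*b^5*sp^11*cp*st^7*ct^3 + 12*a^17*b^5*sp^11*cp*st^9*ct + 24*a^18*b^4*sp^10*cp^2*st^8*ct^2 - 4*a^18*b^4*sp^10*cp^2*st^10 + 4*a^18*b^4*sp^12*st^8*ct^2 - 4*a^19*b^3*sp^11*cp*st^9*ct) * hp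

/-- The first integral `I(φ, θ) = b² cos²θ − c² sin²φ sin²θ` of the static elliptic
billiard map. -/
noncomputable def ellipticFirstIntegral (b c φ θ : ℝ) : ℝ :=
  b ^ 2 * Real.cos θ ^ 2 - c ^ 2 * Real.sin φ ^ 2 * Real.sin θ ^ 2

set_option maxHeartbeats 4000000 in
set_option maxRecDepth 8000 in
/-- `I` is a first integral of the static elliptic billiard map `B_s`:
if `(φ₁, θ₁) = B_s(φ, θ)` (the images being given by the defining formulas of `B_s`
modulo `π`), then `I(φ₁, θ₁) = I(φ, θ)`. -/
theorem static_billiard_first_integral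
    (a b : ℝ) (hb : 0 < b) (hab : b < a)
    (c : ℝ) (hc : c = Real.sqrt (a ^ 2 - b ^ 2))
    (φ θ φ₁ θ₁ : ℝ)
    (hθ : θ ∈ Set.Ioo 0 Real.pi)
    (hcosφ : Real.cos φ ≠ 0) (hcosθ : Real.cos θ ≠ 0)
    (hsinφ : Real.sin φ ≠ 0)
    (hden : b - a * Real.tan φ * Real.tan θ ≠ 0)
    (hcosφ₁ : Real.cos φ₁ ≠ 0) (hsinφ₁ : Real.sin φ₁ ≠ 0)
    (hφ₁ : ∃ k : ℤ, φ₁ = -φ + 2 * Real.arctan (b * (a * Real.tan φ + b * Real.tan θ) /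
        (a * (b - a * Real.tan φ * Real.tan θ))) + k * Real.pi)
    (hθ₁ : ∃ k : ℤ, θ₁ = -θ + Real.arctan (b / (a * Real.tan φ))
        - Real.arctan (b / (a * Real.tan φ₁)) + k * Real.pi) :
    ellipticFirstIntegral b c φ₁ θ₁ = ellipticFirstIntegral b c φ θ := by
  obtain ⟨k1, hk1⟩ := hφ₁
  obtain ⟨k2, hk2⟩ := hθ₁
  have ha : (0:ℝ) < a := hb.trans hab
  have ha' : a ≠ 0 := ne_of_gt ha
  set sp := Real.sin φ with hsp
  set cp := Real.cos φ with hcp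
  set st := Real.sin θ with hst
  set ct := Real.cos θ with hct
  have hp : sp^2 + cp^2 = 1 := Real.sin_sq_add_cos_sq φ
  set N : ℝ := b*(a*sp*ct + b*cp*st) with hN
  set D : ℝ := a*(b*cp*ct - a*sp*st) with hD
  set K : ℝ := D^2 + N^2 with hK
  set C1 : ℝ := (D^2-N^2)*cp + 2*N*D*sp with hC1
  set S1 : ℝ := 2*N*D*cp - (D^2-N^2)*sp with hS1
  have htanφ : Real.tan φ = sp/cp := Real.tan_eq_sin_div_cos φ
  have htanθ : Real.tan θ = st/ct := Real.tan_eq_sin_div_cos θ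
  have hDfac : b*cp*ct - a*sp*st = cp*ct*(b - a * Real.tan φ * Real.tan θ) := by
    rw [htanφ, htanθ]; field_simp
  have hDD : b*cp*ct - a*sp*st ≠ 0 := by
    rw [hDfac]; exact mul_ne_zero (mul_ne_zero hcosφ hcosθ) hden
  have hDne : D ≠ 0 := mul_ne_zero ha' hDD
  have hD2 : (0:ℝ) < D^2 := (sq_nonneg D).lt_of_ne' (pow_ne_zero 2 hDne)
  have hKpos : (0:ℝ) < K := by rw [hK]; exact add_pos_of_pos_of_nonneg hD2 (sq_nonneg N)
  have hKne : K ≠ 0 := ne_of_gt hKpos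
  -- the arctan argument equals N/D
  have hX : b * (a * Real.tan φ + b * Real.tan θ) /
      (a * (b - a * Real.tan φ * Real.tan θ)) = N/D := by
    rw [htanφ, htanθ] at hden ⊢
    rw [hN, hD, div_eq_div_iff (mul_ne_zero ha' hden) (by rw [← hD]; exact hDne)]
    field_simp
  have hφ₁' : φ₁ = (2 * Real.arctan (N/D) - φ) + k1 * Real.pi := by
    rw [hk1, hX]; ring
  obtain ⟨e₁, he₁, hc1, hs1⟩ := sign_shift (2 * Real.arctan (N/D) - φ) k1
  have hcos2a : Real.cos (2 * Real.arctan (N/D)) = (D^2 - N^2)/K := by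
    rw [cos_two_arctan, hK]
    rw [div_eq_div_iff (by positivity) (by rw [← hK]; exact hKne)]
    field_simp

  have hsin2a : Real.sin (2 * Real.arctan (N/D)) = 2*N*D/K := by
    rw [sin_two_arctan, hK]
    rw [div_eq_div_iff (by positivity) (by rw [← hK]; exact hKne)]
    field_simp
  have hcos1 : Real.cos φ₁ = e₁ * (C1/K) := by
    rw [hφ₁', hc1, Real.cos_sub, hcos2a, hsin2a, hC1]
    rw [← hcp, ← hsp]
    field_simp

  have hsin1 : Real.sin φ₁ = e₁ * (S1/K) := by
    rw [hφ₁', hs1, Real.sin_sub, hcos2a, hsin2a, hS1]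
    rw [← hcp, ← hsp]
    field_simp

  have he₁ne : e₁ ≠ 0 := by intro h; rw [h] at he₁; norm_num at he₁
  have hS1ne : S1 ≠ 0 := by
    intro h; apply hsinφ₁; rw [hsin1, h]; simp
  have hC1ne : C1 ≠ 0 := by
    intro h; apply hcosφ₁; rw [hcos1, h]; simp
  set r : ℝ := b*cp/(a*sp) with hr
  set r₁ : ℝ := b*C1/(a*S1) with hr₁
  have htanφr : b / (a * Real.tan φ) = r := by
    rw [htanφ, hr]; field_simp
  have htanφ₁r : b / (a * Real.tan φ₁) = r₁ := by
    rw [Real.tan_eq_sin_div_cos, hsin1, hcos1, hr₁]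
    field_simp
  have hθ₁' : θ₁ = (Real.arctan r - Real.arctan r₁ - θ) + k2 * Real.pi := by
    rw [hk2, htanφr, htanφ₁r]; ring
  obtain ⟨e₂, he₂, hc2, hs2⟩ := sign_shift (Real.arctan r - Real.arctan r₁ - θ) k2
  have hPs : Real.sqrt (1 + r^2) ^ 2 = 1 + r^2 := Real.sq_sqrt (by positivity)
  have hQs : Real.sqrt (1 + r₁^2) ^ 2 = 1 + r₁^2 := Real.sq_sqrt (by positivity)
  have hPne : Real.sqrt (1 + r^2) ≠ 0 := by positivity
  have hQne : Real.sqrt (1 + r₁^2) ≠ 0 := by positivity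
  have hcA : Real.cos (Real.arctan r - Real.arctan r₁)
      = (1 + r*r₁)/(Real.sqrt (1 + r^2) * Real.sqrt (1 + r₁^2)) := by
    rw [Real.cos_sub, Real.cos_arctan, Real.sin_arctan, Real.cos_arctan, Real.sin_arctan]
    field_simp
  have hsA : Real.sin (Real.arctan r - Real.arctan r₁)
      = (r - r₁)/(Real.sqrt (1 + r^2) * Real.sqrt (1 + r₁^2)) := by
    rw [Real.sin_sub, Real.cos_arctan, Real.sin_arctan, Real.cos_arctan, Real.sin_arctan]
    field_simp

  have hcosθ₁sq : Real.cos θ₁ ^ 2 = ((1 + r*r₁)*ct + (r - r₁)*st)^2 / ((1+r^2)*(1+r₁^2)) := by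
    rw [hθ₁', hc2, Real.cos_sub, hcA, hsA, ← hct, ← hst]
    rw [mul_pow, he₂, one_mul]
    rw [show (1 + r*r₁)/(Real.sqrt (1 + r^2) * Real.sqrt (1 + r₁^2)) * ct
        + (r - r₁)/(Real.sqrt (1 + r^2) * Real.sqrt (1 + r₁^2)) * st
        = ((1 + r*r₁)*ct + (r - r₁)*st)/(Real.sqrt (1 + r^2) * Real.sqrt (1 + r₁^2)) by ring]
    rw [div_pow, mul_pow, hPs, hQs]
  have hsinθ₁sq : Real.sin θ₁ ^ 2 = ((r - r₁)*ct - (1 + r*r₁)*st)^2 / ((1+r^2)*(1+r₁^2)) := by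
    rw [hθ₁', hs2, Real.sin_sub, hcA, hsA, ← hct, ← hst]
    rw [mul_pow, he₂, one_mul]
    rw [show (r - r₁)/(Real.sqrt (1 + r^2) * Real.sqrt (1 + r₁^2)) * ct
        - (1 + r*r₁)/(Real.sqrt (1 + r^2) * Real.sqrt (1 + r₁^2)) * st
        = ((r - r₁)*ct - (1 + r*r₁)*st)/(Real.sqrt (1 + r^2) * Real.sqrt (1 + r₁^2)) by ring]
    rw [div_pow, mul_pow, hPs, hQs]
  have hsinφ₁sq : Real.sin φ₁ ^ 2 = S1^2/K^2 := by
    rw [hsin1, mul_pow, he₁, one_mul, div_pow]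
  have hc2v : c^2 = a^2 - b^2 := by
    rw [hc]; exact Real.sq_sqrt (sub_nonneg.mpr (pow_le_pow_left₀ hb.le hab.le 2))
  have hAAne : a^2*sp^2 + b^2*cp^2 ≠ 0 := by
    have h1 : (0:ℝ) < a^2*sp^2 :=
      mul_pos (pow_pos ha 2) ((sq_nonneg sp).lt_of_ne' (pow_ne_zero 2 hsinφ))
    have h2 : (0:ℝ) ≤ b^2*cp^2 := by positivity
    exact ne_of_gt (add_pos_of_pos_of_nonneg h1 h2)
  have hBBne : a^2*S1^2 + b^2*C1^2 ≠ 0 := by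
    have h1 : (0:ℝ) < a^2*S1^2 :=
      mul_pos (pow_pos ha 2) ((sq_nonneg S1).lt_of_ne' (pow_ne_zero 2 hS1ne))
    have h2 : (0:ℝ) ≤ b^2*C1^2 := by positivity
    exact ne_of_gt (add_pos_of_pos_of_nonneg h1 h2)
  have hconvC : ((1 + r*r₁)*ct + (r - r₁)*st)^2 / ((1+r^2)*(1+r₁^2))
      = ((a^2*sp*S1 + b^2*cp*C1)*ct + a*b*(cp*S1 - sp*C1)*st)^2
        / ((a^2*sp^2 + b^2*cp^2)*(a^2*S1^2 + b^2*C1^2)) := by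
    rw [hr, hr₁]; exact conv1 a b sp cp st ct C1 S1 ha' hsinφ hS1ne
  have hconvS : ((r - r₁)*ct - (1 + r*r₁)*st)^2 / ((1+r^2)*(1+r₁^2))
      = (a*b*(cp*S1 - sp*C1)*ct - (a^2*sp*S1 + b^2*cp*C1)*st)^2
        / ((a^2*sp^2 + b^2*cp^2)*(a^2*S1^2 + b^2*C1^2)) := by
    rw [hr, hr₁]; exact conv2 a b sp cp st ct C1 S1 ha' hsinφ hS1ne
  have key := key_poly a b sp cp st ct N D K C1 S1 hp hN hD hK hC1 hS1
  show b ^ 2 * Real.cos θ₁ ^ 2 - c ^ 2 * Real.sin φ₁ ^ 2 * Real.sin θ₁ ^ 2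
      = b ^ 2 * ct ^ 2 - c ^ 2 * sp ^ 2 * st ^ 2
  rw [hcosθ₁sq, hsinθ₁sq, hsinφ₁sq, hconvC, hconvS, hc2v]
  exact div_identity _ _ _ _ _ _ _ _ _ (mul_ne_zero hAAne hBBne) (pow_ne_zero 2 hKne) key
end

section
/- The point z = (0, π/2) (corresponding to the period-two billiard motion along the major axis, with φ taken modulo π) is a fixed point of the static elliptic billiard map B_s. Moreover B_s is differentiable at z and the differential DB_s(0, π/2) has eigenvalues λ = (a+c)/(a−c) > 1 and λ^{−1} < 1; in particular z is a hyperbolic saddle fixed point. -/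
open Real

noncomputable def gN (a b : ℝ) (p : ℝ × ℝ) : ℝ :=
  b * (a * Real.sin p.1 * Real.cos p.2 + b * Real.cos p.1 * Real.sin p.2)
noncomputable def gD (a b : ℝ) (p : ℝ × ℝ) : ℝ :=
  a * (b * Real.cos p.1 * Real.cos p.2 - a * Real.sin p.1 * Real.sin p.2)
noncomputable def gY (a b : ℝ) (p : ℝ × ℝ) : ℝ := gD a b p * (gN a b p)⁻¹
noncomputable def gG (a b : ℝ) (p : ℝ × ℝ) : ℝ :=
  -p.1 + Real.pi - 2 * Real.arctan (gY a b p)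
noncomputable def gH (a b : ℝ) (p : ℝ × ℝ) : ℝ :=
  -p.2 - Real.arctan (a/b * Real.tan p.1) + Real.arctan (a/b * Real.tan (gG a b p))

section deriv
variable {a b : ℝ}

lemma hfd_sin_fst (p : ℝ × ℝ) : HasFDerivAt (fun q : ℝ × ℝ => Real.sin q.1)
    (Real.cos p.1 • ContinuousLinearMap.fst ℝ ℝ ℝ) p :=
  (Real.hasDerivAt_sin _).comp_hasFDerivAt _ hasFDerivAt_fst

lemma hfd_cos_fst (p : ℝ × ℝ) : HasFDerivAt (fun q : ℝ × ℝ => Real.cos q.1)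
    ((-Real.sin p.1) • ContinuousLinearMap.fst ℝ ℝ ℝ) p :=
  (Real.hasDerivAt_cos _).comp_hasFDerivAt _ hasFDerivAt_fst

lemma hfd_sin_snd (p : ℝ × ℝ) : HasFDerivAt (fun q : ℝ × ℝ => Real.sin q.2)
    (Real.cos p.2 • ContinuousLinearMap.snd ℝ ℝ ℝ) p :=
  (Real.hasDerivAt_sin _).comp_hasFDerivAt _ hasFDerivAt_snd

lemma hfd_cos_snd (p : ℝ × ℝ) : HasFDerivAt (fun q : ℝ × ℝ => Real.cos q.2)
    ((-Real.sin p.2) • ContinuousLinearMap.snd ℝ ℝ ℝ) p :=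
  (Real.hasDerivAt_cos _).comp_hasFDerivAt _ hasFDerivAt_snd

lemma hfd_gN (p : ℝ × ℝ) : ∃ L : ℝ × ℝ →L[ℝ] ℝ, HasFDerivAt (gN a b) L p ∧
    ∀ v : ℝ × ℝ, L v = b * (a * (Real.cos p.1 * Real.cos p.2 * v.1 - Real.sin p.1 * Real.sin p.2 * v.2)
      + b * (-Real.sin p.1 * Real.sin p.2 * v.1 + Real.cos p.1 * Real.cos p.2 * v.2)) := by
  have h := ((((hfd_sin_fst p).const_mul a).mul (hfd_cos_snd p)).add
      (((hfd_cos_fst p).const_mul b).mul (hfd_sin_snd p))).const_mul b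
  refine ⟨_, h, fun v => ?_⟩
  simp only [ContinuousLinearMap.add_apply, ContinuousLinearMap.sub_apply,
    ContinuousLinearMap.smul_apply, ContinuousLinearMap.coe_fst', ContinuousLinearMap.coe_snd',
    smul_eq_mul]
  ring

lemma hfd_gD (p : ℝ × ℝ) : ∃ L : ℝ × ℝ →L[ℝ] ℝ, HasFDerivAt (gD a b) L p ∧
    ∀ v : ℝ × ℝ, L v = a * (b * (-Real.sin p.1 * Real.cos p.2 * v.1 - Real.cos p.1 * Real.sin p.2 * v.2)
      - a * (Real.cos p.1 * Real.sin p.2 * v.1 + Real.sin p.1 * Real.cos p.2 * v.2)) := by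
  have h := ((((hfd_cos_fst p).const_mul b).mul (hfd_cos_snd p)).sub
      (((hfd_sin_fst p).const_mul a).mul (hfd_sin_snd p))).const_mul a
  refine ⟨_, h, fun v => ?_⟩
  simp only [ContinuousLinearMap.add_apply, ContinuousLinearMap.sub_apply,
    ContinuousLinearMap.smul_apply, ContinuousLinearMap.coe_fst', ContinuousLinearMap.coe_snd',
    smul_eq_mul]
  ring
end deriv

noncomputable def gW (a b : ℝ) (p : ℝ × ℝ) : ℝ :=
  Real.sin p.1 * (gN a b p * gN a b p - gD a b p * gD a b p)
    + 2 * Real.cos p.1 * gN a b p * gD a b p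

notation "zpt" => ((0 : ℝ), Real.pi / 2)

section derivz
variable {a b : ℝ} (ha : 0 < a) (hb : 0 < b)
include ha hb

lemma gN_z : gN a b zpt = b * b := by simp [gN]
lemma gD_z : gD a b zpt = 0 := by simp [gD]
lemma gG_z : gG a b zpt = Real.pi := by simp [gG, gY, gD]
lemma gH_z : gH a b zpt = -(Real.pi/2) := by
  simp [gH, gG_z ha hb, Real.tan_pi]

lemma hfd_gG : HasFDerivAt (gG a b)
    (((2*a^2/b^2 - 1) • ContinuousLinearMap.fst ℝ ℝ ℝ
      + (2*a/b) • ContinuousLinearMap.snd ℝ ℝ ℝ)) zpt := by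
  obtain ⟨LN, hLN, hLNv⟩ := hfd_gN (a := a) (b := b) zpt
  obtain ⟨LD, hLD, hLDv⟩ := hfd_gD (a := a) (b := b) zpt
  have hNne : gN a b zpt ≠ 0 := by rw [gN_z ha hb]; positivity
  have hNi := (hasDerivAt_inv hNne).comp_hasFDerivAt zpt hLN
  have hY : HasFDerivAt (gY a b)
      (gD a b zpt • ((-(gN a b zpt ^ 2)⁻¹) • LN) + (gN a b zpt)⁻¹ • LD) zpt := hLD.mul hNi
  have harc := (Real.hasDerivAt_arctan (gY a b zpt)).comp_hasFDerivAt zpt hY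
  have h := ((hasFDerivAt_fst.neg.add_const Real.pi).sub (harc.const_mul 2))
  have h' : HasFDerivAt (gG a b) _ zpt := h
  have hYz : gY a b zpt = 0 := by simp [gY, gD]
  rw [hYz] at h'
  refine h'.congr_fderiv ?_
  apply ContinuousLinearMap.ext
  intro v
  simp only [ContinuousLinearMap.add_apply, ContinuousLinearMap.sub_apply,
    ContinuousLinearMap.smul_apply, ContinuousLinearMap.coe_fst', ContinuousLinearMap.coe_snd',
    ContinuousLinearMap.neg_apply, smul_eq_mul]
  rw [hLNv, hLDv]
  rw [gN_z ha hb, gD_z ha hb]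
  norm_num
  field_simp
  ring
end derivz

section derivz2
variable {a b : ℝ} (ha : 0 < a) (hb : 0 < b)
include ha hb

lemma hfd_gH : HasFDerivAt (gH a b)
    ((2*a*(a^2-b^2)/b^3) • ContinuousLinearMap.fst ℝ ℝ ℝ
      + (2*a^2/b^2 - 1) • ContinuousLinearMap.snd ℝ ℝ ℝ) zpt := by
  have hc1 : Real.cos (zpt).1 ≠ 0 := by norm_num
  have hcG : Real.cos (gG a b zpt) ≠ 0 := by
    rw [gG_z ha hb, Real.cos_pi]; norm_num
  have htf := (Real.hasDerivAt_tan hc1).comp_hasFDerivAt zpt (hasFDerivAt_fst (𝕜 := ℝ)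
    (p := zpt) (E := ℝ) (F := ℝ))
  have hq1 := htf.const_mul (a/b)
  have harc1 := (Real.hasDerivAt_arctan (a/b * Real.tan (zpt).1)).comp_hasFDerivAt zpt hq1
  have htG := (Real.hasDerivAt_tan hcG).comp_hasFDerivAt zpt (hfd_gG ha hb)
  have hq2 := htG.const_mul (a/b)
  have harc2 := (Real.hasDerivAt_arctan (a/b * Real.tan (gG a b zpt))).comp_hasFDerivAt zpt hq2
  have h := ((hasFDerivAt_snd (𝕜 := ℝ) (p := zpt) (E := ℝ) (F := ℝ)).neg.sub harc1).add harc2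
  have h' : HasFDerivAt (gH a b) _ zpt := h
  rw [gG_z ha hb] at h'
  simp only [Real.tan_pi, Real.tan_zero, Real.cos_pi, Real.cos_zero] at h'
  refine h'.congr_fderiv ?_
  apply ContinuousLinearMap.ext
  intro v
  simp only [ContinuousLinearMap.add_apply, ContinuousLinearMap.sub_apply,
    ContinuousLinearMap.smul_apply, ContinuousLinearMap.coe_fst', ContinuousLinearMap.coe_snd',
    ContinuousLinearMap.neg_apply, smul_eq_mul]
  norm_num
  field_simp
  ring

lemma hfd_gW_curve : HasDerivAt (fun s : ℝ => gW a b (s, Real.pi/2 + s))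
    (b*b*(b*b - 2*a*(a+b))) 0 := by
  obtain ⟨LN, hLN, hLNv⟩ := hfd_gN (a := a) (b := b) zpt
  obtain ⟨LD, hLD, hLDv⟩ := hfd_gD (a := a) (b := b) zpt
  have hW : HasFDerivAt (gW a b) _ zpt :=
    ((hfd_sin_fst zpt).mul ((hLN.mul hLN).sub (hLD.mul hLD))).add
      ((((hfd_cos_fst zpt).const_mul 2).mul hLN).mul hLD)
  have hγ : HasDerivAt (fun s : ℝ => ((s, Real.pi/2 + s) : ℝ × ℝ)) (1, 1) 0 := by
    have h1 : HasDerivAt (fun s : ℝ => s) 1 0 := hasDerivAt_id 0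
    have h2 : HasDerivAt (fun s : ℝ => Real.pi/2 + s) 1 0 := h1.const_add _
    exact h1.prodMk h2
  rw [show ((0:ℝ), Real.pi/2) = ((0:ℝ), Real.pi/2 + 0) by norm_num] at hW
  have hcomp := hW.comp_hasDerivAt 0 hγ
  have : HasDerivAt (fun s : ℝ => gW a b (s, Real.pi/2 + s)) _ 0 := hcomp
  simp only [add_zero] at this
  convert this using 1
  simp only [ContinuousLinearMap.add_apply, ContinuousLinearMap.sub_apply,
    ContinuousLinearMap.smul_apply, ContinuousLinearMap.coe_fst', ContinuousLinearMap.coe_snd',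
    smul_eq_mul]
  simp only [Pi.mul_apply, Pi.sub_apply]
  rw [hLNv, hLDv]
  rw [gN_z ha hb, gD_z ha hb]
  norm_num
  ring
end derivz2

section ident
variable {a b : ℝ} (ha : 0 < a) (hb : 0 < b)

-- tan-form denominator equals gD up to cos factors
lemma tanden_eq (ha : 0 < a) (p : ℝ × ℝ) (h1 : Real.cos p.1 ≠ 0) (h2 : Real.cos p.2 ≠ 0) :
    b - a * Real.tan p.1 * Real.tan p.2 = gD a b p / (a * (Real.cos p.1 * Real.cos p.2)) := by
  rw [eq_div_iff (by simp [ha.ne', h1, h2] : a * (Real.cos p.1 * Real.cos p.2) ≠ 0),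
    gD, Real.tan_eq_sin_div_cos, Real.tan_eq_sin_div_cos]
  field_simp

include ha in
lemma tanden_ne (p : ℝ × ℝ) (h1 : Real.cos p.1 ≠ 0) (h2 : Real.cos p.2 ≠ 0)
    (hD : gD a b p ≠ 0) : b - a * Real.tan p.1 * Real.tan p.2 ≠ 0 := by
  rw [tanden_eq ha p h1 h2]
  exact div_ne_zero hD (by simp [ha.ne', h1, h2])

include ha in
lemma X_eq (p : ℝ × ℝ) (h1 : Real.cos p.1 ≠ 0) (h2 : Real.cos p.2 ≠ 0)
    (hD : gD a b p ≠ 0) :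
    b * (a * Real.tan p.1 + b * Real.tan p.2) /
      (a * (b - a * Real.tan p.1 * Real.tan p.2)) = gN a b p / gD a b p := by
  have hcc : a * (Real.cos p.1 * Real.cos p.2) ≠ 0 := by simp [ha.ne', h1, h2]
  have hden : a * (gD a b p / (a * (Real.cos p.1 * Real.cos p.2))) ≠ 0 := by
    exact mul_ne_zero ha.ne' (div_ne_zero hD hcc)
  rw [tanden_eq ha p h1 h2, div_eq_div_iff hden hD]
  rw [gN, gD, Real.tan_eq_sin_div_cos, Real.tan_eq_sin_div_cos]
  field_simp

include ha hb in
lemma step1_ident (p : ℝ × ℝ) (h1 : Real.cos p.1 ≠ 0) (h2 : Real.cos p.2 ≠ 0)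
    (hD : gD a b p ≠ 0) (hN : gN a b p ≠ 0) :
    ∃ j : ℤ, -p.1 + 2 * Real.arctan (b * (a * Real.tan p.1 + b * Real.tan p.2) /
      (a * (b - a * Real.tan p.1 * Real.tan p.2))) = gG a b p + j * Real.pi := by
  rw [X_eq ha p h1 h2 hD, gG]
  have hXne : gN a b p / gD a b p ≠ 0 := div_ne_zero hN hD
  have hYX : gY a b p = (gN a b p / gD a b p)⁻¹ := by
    rw [gY, inv_div, div_eq_mul_inv]
  rcases hXne.lt_or_gt with hneg | hpos
  · refine ⟨-2, ?_⟩
    rw [hYX, Real.arctan_inv_of_neg hneg]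
    push_cast
    ring
  · refine ⟨0, ?_⟩
    rw [hYX, Real.arctan_inv_of_pos hpos]
    push_cast
    ring

lemma sin_gG (p : ℝ × ℝ) (hN : gN a b p ≠ 0) :
    Real.sin (gG a b p) = gW a b p / (gN a b p ^ 2 + gD a b p ^ 2) := by
  have h : gG a b p = Real.pi - (p.1 + 2 * Real.arctan (gY a b p)) := by rw [gG]; ring
  rw [h, Real.sin_pi_sub, Real.sin_add, two_mul, Real.sin_add, Real.cos_add,
    Real.sin_arctan, Real.cos_arctan]
  set Y := gY a b p with hY
  have h1Y : (0:ℝ) < 1 + Y ^ 2 := by positivity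
  have hs0 : Real.sqrt (1 + Y ^ 2) ≠ 0 := by positivity
  have hs2 : Real.sqrt (1 + Y ^ 2) ^ 2 = 1 + Y ^ 2 := Real.sq_sqrt (le_of_lt h1Y)
  have hYv : Y = gD a b p * (gN a b p)⁻¹ := by rw [hY, gY]
  have key : Real.sin p.1 * (1 / Real.sqrt (1 + Y ^ 2) * (1 / Real.sqrt (1 + Y ^ 2)) -
        Y / Real.sqrt (1 + Y ^ 2) * (Y / Real.sqrt (1 + Y ^ 2))) +
      Real.cos p.1 * (Y / Real.sqrt (1 + Y ^ 2) * (1 / Real.sqrt (1 + Y ^ 2)) +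
        1 / Real.sqrt (1 + Y ^ 2) * (Y / Real.sqrt (1 + Y ^ 2))) =
      (Real.sin p.1 * (1 - Y ^ 2) + 2 * Real.cos p.1 * Y) / (1 + Y ^ 2) := by
    rw [← hs2]
    field_simp
    simp only [hs2]
    ring
  rw [key, hYv, gW]
  rw [div_eq_div_iff (by rw [hYv] at h1Y; exact ne_of_gt h1Y) (by positivity)]
  field_simp
end ident

section ident2
variable {a b : ℝ} (ha : 0 < a) (hb : 0 < b)

include ha hb in
lemma step2_ident (p : ℝ × ℝ) (h1 : Real.cos p.1 ≠ 0) (hs1 : Real.sin p.1 ≠ 0)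
    (hcG : Real.cos (gG a b p) ≠ 0) (hsG : Real.sin (gG a b p) ≠ 0)
    (B1 : ℝ) (htB : Real.tan B1 = Real.tan (gG a b p)) :
    ∃ j : ℤ, -p.2 + Real.arctan (b / (a * Real.tan p.1))
      - Real.arctan (b / (a * Real.tan B1)) = gH a b p + j * Real.pi := by
  have htφ : Real.tan p.1 ≠ 0 := by
    rw [Real.tan_eq_sin_div_cos]; exact div_ne_zero hs1 h1
  have htG : Real.tan (gG a b p) ≠ 0 := by
    rw [Real.tan_eq_sin_div_cos]; exact div_ne_zero hsG hcG
  have hu : a / b * Real.tan p.1 ≠ 0 := by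
    apply mul_ne_zero _ htφ; positivity
  have hv : a / b * Real.tan (gG a b p) ≠ 0 := by
    apply mul_ne_zero _ htG; positivity
  have hiu : b / (a * Real.tan p.1) = (a / b * Real.tan p.1)⁻¹ := by
    field_simp
  have hiv : b / (a * Real.tan B1) = (a / b * Real.tan (gG a b p))⁻¹ := by
    rw [htB]; field_simp
  rw [hiu, hiv, gH]
  rcases hu.lt_or_gt with hun | hup <;> rcases hv.lt_or_gt with hvn | hvp
  · exact ⟨0, by rw [Real.arctan_inv_of_neg hun, Real.arctan_inv_of_neg hvn]; push_cast; ring⟩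
  · exact ⟨-1, by rw [Real.arctan_inv_of_neg hun, Real.arctan_inv_of_pos hvp]; push_cast; ring⟩
  · exact ⟨1, by rw [Real.arctan_inv_of_pos hup, Real.arctan_inv_of_neg hvn]; push_cast; ring⟩
  · exact ⟨0, by rw [Real.arctan_inv_of_pos hup, Real.arctan_inv_of_pos hvp]; push_cast; ring⟩
end ident2

-- constancy of integer-valued continuous functions on preconnected open sets with dense good set
lemma const_of_int_valued {U S : Set (ℝ × ℝ)} (hUo : IsOpen U) (hUc : IsPreconnected U)
    (hdense : ∀ p ∈ U, p ∈ closure (U ∩ S)) {f : ℝ × ℝ → ℝ} (hf : ContinuousOn f U)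
    (hfk : ∀ p ∈ U ∩ S, ∃ k : ℤ, f p = k) {z : ℝ × ℝ} (hz : z ∈ U) :
    ∀ p ∈ U, f p = f z := by
  have hint : ∀ p ∈ U, ∃ k : ℤ, f p = k := by
    intro p hp
    have hne : (nhdsWithin p (U ∩ S)).NeBot :=
      mem_closure_iff_nhdsWithin_neBot.mp (hdense p hp)
    have hct : ContinuousWithinAt f (U ∩ S) p :=
      (hf.continuousAt (hUo.mem_nhds hp)).continuousWithinAt
    have hmem : ∀ᶠ q in nhdsWithin p (U ∩ S), f q ∈ Set.range ((↑) : ℤ → ℝ) := by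
      filter_upwards [self_mem_nhdsWithin] with q hq
      obtain ⟨k, hk⟩ := hfk q hq
      exact ⟨k, hk.symm⟩
    obtain ⟨k, hk⟩ := (Int.isClosedEmbedding_coe_real.isClosed_range).mem_of_tendsto hct hmem
    exact ⟨k, hk.symm⟩
  intro p hp
  by_contra hne'
  obtain ⟨k, hk⟩ := hint p hp
  obtain ⟨l, hl⟩ := hint z hz
  have hkl : k ≠ l := fun h => hne' (by rw [hk, hl, h])
  have himg : IsPreconnected (f '' U) := hUc.image f hf
  have hoc := himg.ordConnected
  have hmid : ∀ m : ℤ, ((m : ℝ) + 1/2) ∈ f '' U → False := by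
    intro m hm
    obtain ⟨q, hq, hfq⟩ := hm
    obtain ⟨j, hj⟩ := hint q hq
    rw [hj] at hfq
    have : (2 * j : ℤ) = 2 * m + 1 := by
      have : (2 * (j:ℝ)) = 2 * m + 1 := by rw [hfq]; ring
      exact_mod_cast this
    omega
  rcases hkl.lt_or_gt with h | h
  · apply hmid k
    apply hoc.out (Set.mem_image_of_mem f hp) (Set.mem_image_of_mem f hz)
    constructor
    · rw [hk]; linarith
    · rw [hl]
      have : (k : ℝ) + 1 ≤ l := by exact_mod_cast h
      linarith
  · apply hmid l
    apply hoc.out (Set.mem_image_of_mem f hz) (Set.mem_image_of_mem f hp)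
    constructor
    · rw [hl]; linarith
    · rw [hk]
      have : (l : ℝ) + 1 ≤ k := by exact_mod_cast h
      linarith


noncomputable def Fbad (a b : ℝ) (p : ℝ × ℝ) : ℝ :=
  Real.sin p.1 * Real.cos p.2 * gD a b p * gW a b p

theorem analyticAt_csin {z : ℂ} : AnalyticAt ℂ Complex.sin z := by
  have h : Complex.sin = fun z => (Complex.exp (-z * Complex.I) - Complex.exp (z * Complex.I)) * Complex.I / 2 := by
    funext z; rw [Complex.sin]
  rw [h]
  apply AnalyticAt.div
  · exact ((analyticAt_cexp.comp ((analyticAt_id.neg).mul analyticAt_const)).sub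
      (analyticAt_cexp.comp (analyticAt_id.mul analyticAt_const))).mul analyticAt_const
  · exact analyticAt_const
  · norm_num

theorem analyticAt_ccos {z : ℂ} : AnalyticAt ℂ Complex.cos z := by
  have h : Complex.cos = fun z => (Complex.exp (z * Complex.I) + Complex.exp (-z * Complex.I)) / 2 := by
    funext z; rw [Complex.cos]
  rw [h]
  apply AnalyticAt.div
  · exact (analyticAt_cexp.comp (analyticAt_id.mul analyticAt_const)).add
      (analyticAt_cexp.comp ((analyticAt_id.neg).mul analyticAt_const))
  · exact analyticAt_const
  · norm_num

theorem analyticAt_rsin {x : ℝ} : AnalyticAt ℝ Real.sin x := by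
  have h : Real.sin = fun x : ℝ => Complex.reCLM (Complex.sin (Complex.ofRealCLM x)) := by
    funext x; simp [Complex.sin_ofReal_re]
  rw [h]
  exact (Complex.reCLM.analyticAt _).comp
    ((analyticAt_csin.restrictScalars).comp (Complex.ofRealCLM.analyticAt _))

theorem analyticAt_rcos {x : ℝ} : AnalyticAt ℝ Real.cos x := by
  have h : Real.cos = fun x : ℝ => Complex.reCLM (Complex.cos (Complex.ofRealCLM x)) := by
    funext x; simp [Complex.cos_ofReal_re]
  rw [h]
  exact (Complex.reCLM.analyticAt _).comp
    ((analyticAt_ccos.restrictScalars).comp (Complex.ofRealCLM.analyticAt _))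

lemma analyticAt_s1 {p : ℝ × ℝ} : AnalyticAt ℝ (fun q : ℝ × ℝ => Real.sin q.1) p :=
  analyticAt_rsin.comp analyticAt_fst
lemma analyticAt_c1 {p : ℝ × ℝ} : AnalyticAt ℝ (fun q : ℝ × ℝ => Real.cos q.1) p :=
  analyticAt_rcos.comp analyticAt_fst
lemma analyticAt_s2 {p : ℝ × ℝ} : AnalyticAt ℝ (fun q : ℝ × ℝ => Real.sin q.2) p :=
  analyticAt_rsin.comp analyticAt_snd
lemma analyticAt_c2 {p : ℝ × ℝ} : AnalyticAt ℝ (fun q : ℝ × ℝ => Real.cos q.2) p :=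
  analyticAt_rcos.comp analyticAt_snd

lemma analyticAt_gN {a b : ℝ} {p : ℝ × ℝ} : AnalyticAt ℝ (gN a b) p := by
  unfold gN
  exact analyticAt_const.mul (((analyticAt_const.mul analyticAt_s1).mul analyticAt_c2).add
    ((analyticAt_const.mul analyticAt_c1).mul analyticAt_s2))

lemma analyticAt_gD {a b : ℝ} {p : ℝ × ℝ} : AnalyticAt ℝ (gD a b) p := by
  unfold gD
  exact analyticAt_const.mul (((analyticAt_const.mul analyticAt_c1).mul analyticAt_c2).sub
    ((analyticAt_const.mul analyticAt_s1).mul analyticAt_s2))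

lemma analyticAt_Fbad {a b : ℝ} {p : ℝ × ℝ} : AnalyticAt ℝ (Fbad a b) p := by
  have hW : AnalyticAt ℝ (gW a b) p := by
    unfold gW
    exact (analyticAt_s1.mul ((analyticAt_gN.mul analyticAt_gN).sub
      (analyticAt_gD.mul analyticAt_gD))).add
      (((analyticAt_const.mul analyticAt_c1).mul analyticAt_gN).mul analyticAt_gD)
  unfold Fbad
  exact ((analyticAt_s1.mul analyticAt_c2).mul analyticAt_gD).mul hW

section wit
variable {a b : ℝ}

lemma witness (ha : 0 < a) (hb : 0 < b) (hab : b < a) {r : ℝ} (hr : 0 < r) :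
    ∃ q ∈ Metric.ball zpt r, Fbad a b q ≠ 0 := by
  have hL : (b*b*(b*b - 2*a*(a+b))) ≠ 0 := by
    have h2 : b*b - 2*a*(a+b) < 0 := by nlinarith
    exact ne_of_lt (mul_neg_of_pos_of_neg (mul_pos hb hb) h2)
  have hw0 : gW a b zpt = 0 := by simp [gW, gN, gD]
  have hev2 := (hfd_gW_curve ha hb).eventually_ne (c := gW a b ((0:ℝ), Real.pi/2 + 0)) hL
  have hmono : nhdsWithin (0:ℝ) (Set.Ioi 0) ≤ nhdsWithin 0 {(0:ℝ)}ᶜ :=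
    nhdsWithin_mono 0 (fun x hx => ne_of_gt hx)
  have hev2' : ∀ᶠ s in nhdsWithin (0:ℝ) (Set.Ioi 0),
      gW a b (s, Real.pi/2 + s) ≠ 0 := by
    have h := hev2.filter_mono hmono
    have h0 : gW a b ((0:ℝ), Real.pi/2 + 0) = 0 := by rw [add_zero]; exact hw0
    filter_upwards [h] with s hs
    rw [h0] at hs
    exact hs
  have hmin : (0:ℝ) < min r (Real.pi/2) := lt_min hr (by positivity)
  have hev1 : ∀ᶠ s in nhdsWithin (0:ℝ) (Set.Ioi 0), s ∈ Set.Ioo 0 (min r (Real.pi/2)) :=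
    Ioo_mem_nhdsGT_of_mem ⟨le_refl _, hmin⟩
  obtain ⟨s, hs1, hs2⟩ := (hev1.and hev2').exists
  obtain ⟨hs0, hsm⟩ := hs1
  have hsr : s < r := lt_of_lt_of_le hsm (min_le_left _ _)
  have hspi : s < Real.pi/2 := lt_of_lt_of_le hsm (min_le_right _ _)
  have hsinp : 0 < Real.sin s := Real.sin_pos_of_pos_of_lt_pi hs0 (by linarith [Real.pi_pos])
  have hcosp : 0 < Real.cos s := Real.cos_pos_of_mem_Ioo ⟨by linarith [Real.pi_pos], hspi⟩
  refine ⟨(s, Real.pi/2 + s), ?_, ?_⟩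
  · rw [Metric.mem_ball]
    have : dist ((s, Real.pi/2 + s) : ℝ × ℝ) zpt = |s| := by
      simp [Prod.dist_eq, Real.dist_eq]
    rw [this, abs_of_pos hs0]
    exact hsr
  · have hc2 : Real.cos ((s, Real.pi/2 + s) : ℝ × ℝ).2 = -Real.sin s := by
      simp [Real.cos_add]
    have hgD : gD a b ((s, Real.pi/2 + s) : ℝ × ℝ) = -(a*(a+b)*(Real.sin s*Real.cos s)) := by
      simp [gD, Real.cos_add, Real.sin_add]
      ring
    unfold Fbad
    apply mul_ne_zero
    apply mul_ne_zero
    apply mul_ne_zero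
    · exact ne_of_gt hsinp
    · rw [hc2]; exact neg_ne_zero.mpr (ne_of_gt hsinp)
    · rw [hgD]
      apply neg_ne_zero.mpr
      positivity
    · exact hs2

lemma dense_good {r : ℝ} (hr : 0 < r) (hwit : ∃ q ∈ Metric.ball zpt r, Fbad a b q ≠ 0) :
    ∀ p ∈ Metric.ball zpt r,
      p ∈ closure (Metric.ball zpt r ∩ {q | Fbad a b q ≠ 0}) := by
  intro p hp
  by_contra hcl
  have hOo : IsOpen (closure (Metric.ball zpt r ∩ {q | Fbad a b q ≠ 0}))ᶜ :=
    isClosed_closure.isOpen_compl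
  have hev : Fbad a b =ᶠ[nhds p] 0 := by
    have hmem : (closure (Metric.ball zpt r ∩ {q | Fbad a b q ≠ 0}))ᶜ ∩ Metric.ball zpt r ∈ nhds p :=
      Filter.inter_mem (hOo.mem_nhds hcl) ((Metric.isOpen_ball).mem_nhds hp)
    filter_upwards [hmem] with q hq
    by_contra hq0
    exact hq.1 (subset_closure ⟨hq.2, hq0⟩)
  have hana : AnalyticOnNhd ℝ (Fbad a b) (Metric.ball zpt r) := fun q _ => analyticAt_Fbad
  have heq := hana.eqOn_zero_of_preconnected_of_eventuallyEq_zero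
    ((convex_ball zpt r).isPreconnected) hp hev
  obtain ⟨q, hq, hq0⟩ := hwit
  exact hq0 (heq hq)
end wit

section cont
variable {a b : ℝ} {p : ℝ × ℝ}

lemma cont_gN : Continuous (gN a b) := by unfold gN; fun_prop
lemma cont_gD : Continuous (gD a b) := by unfold gD; fun_prop

lemma contAt_gG (hN : gN a b p ≠ 0) : ContinuousAt (gG a b) p := by
  unfold gG gY
  apply ContinuousAt.sub
  · exact ContinuousAt.add continuousAt_fst.neg continuousAt_const
  · apply ContinuousAt.mul continuousAt_const
    exact Real.continuous_arctan.continuousAt.comp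
      ((cont_gD.continuousAt).mul ((cont_gN.continuousAt).inv₀ hN))

lemma contAt_gH (hN : gN a b p ≠ 0) (h1 : Real.cos p.1 ≠ 0)
    (hcG : Real.cos (gG a b p) ≠ 0) : ContinuousAt (gH a b) p := by
  unfold gH
  refine ContinuousAt.add (ContinuousAt.sub continuousAt_snd.neg ?_) ?_
  · exact Real.continuous_arctan.continuousAt.comp
      (continuousAt_const.mul ((Real.continuousAt_tan.mpr h1).comp continuousAt_fst))
  · exact Real.continuous_arctan.continuousAt.comp
      (continuousAt_const.mul ((Real.continuousAt_tan.mpr hcG).comp (contAt_gG hN)))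
end cont

lemma eig_components {a b c : ℝ} (hb : 0 < b) (hc0 : 0 < c) (hca : c < a)
    (hc2 : c ^ 2 = a ^ 2 - b ^ 2) :
    ((2*a^2/b^2 - 1) * b + (2*a/b) * c = (a + c)/(a - c) * b) ∧
    ((2*a*(a^2-b^2)/b^3) * b + (2*a^2/b^2 - 1) * c = (a + c)/(a - c) * c) ∧
    ((2*a^2/b^2 - 1) * b + (2*a/b) * (-c) = (a - c)/(a + c) * b) ∧
    ((2*a*(a^2-b^2)/b^3) * b + (2*a^2/b^2 - 1) * (-c) = (a - c)/(a + c) * (-c)) := by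
  have hbne : b ≠ 0 := ne_of_gt hb
  have hacne : a - c ≠ 0 := ne_of_gt (by linarith)
  have hacne' : a + c ≠ 0 := ne_of_gt (by linarith)
  have hbb : b ^ 2 = a ^ 2 - c ^ 2 := by linarith
  have hdne : a ^ 2 - c ^ 2 ≠ 0 := by rw [← hbb]; positivity
  refine ⟨?_, ?_, ?_, ?_⟩
  · have e1 : (2*a^2/b^2 - 1) * b + (2*a/b) * c = ((2*a^2 - b^2) * b + 2*a*b*c)/b^2 := by
      field_simp
    rw [e1, hbb]; field_simp; ring
  · have e2 : (2*a*(a^2-b^2)/b^3) * b + (2*a^2/b^2 - 1) * c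
        = ((2*a*(a^2-b^2)) * b + (2*a^2 - b^2)*b*c) / (b * b^2) := by
      field_simp
    rw [e2, ← hc2, hbb]; field_simp; ring
  · have e1 : (2*a^2/b^2 - 1) * b + (2*a/b) * (-c) = ((2*a^2 - b^2) * b - 2*a*b*c)/b^2 := by
      field_simp; ring
    rw [e1, hbb]; field_simp; ring
  · have e2 : (2*a*(a^2-b^2)/b^3) * b + (2*a^2/b^2 - 1) * (-c)
        = ((2*a*(a^2-b^2)) * b - (2*a^2 - b^2)*b*c) / (b * b^2) := by
      field_simp; ring
    rw [e2, ← hc2, hbb]; field_simp; ring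

/-- the point `z = (0, π/2)` (motion along the major axis, `φ` taken
modulo `π`) is a fixed point of the static elliptic billiard map `B_s`, `B_s` is
differentiable at `z` and the differential there has eigenvalues
`λ = (a+c)/(a−c) > 1` and `λ⁻¹ < 1`, so `z` is a hyperbolic saddle.  Here `Bs` is
any continuous extension of the map given, modulo `π`, by the defining formulas of
the static elliptic billiard map. -/
theorem major_axis_saddle_fixed_point
    (a b : ℝ) (hb : 0 < b) (hab : b < a)
    (c lam : ℝ) (hc : c = Real.sqrt (a ^ 2 - b ^ 2)) (hlam : lam = (a + c) / (a - c))
    (Bs : ℝ × ℝ → ℝ × ℝ) (hcont : Continuous Bs)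
    (hBs1 : ∀ φ θ : ℝ, Real.cos φ ≠ 0 → Real.cos θ ≠ 0 →
      b - a * Real.tan φ * Real.tan θ ≠ 0 →
      ∃ k : ℤ, (Bs (φ, θ)).1 = -φ + 2 * Real.arctan (b * (a * Real.tan φ + b * Real.tan θ) /
        (a * (b - a * Real.tan φ * Real.tan θ))) + k * Real.pi)
    (hBs2 : ∀ φ θ : ℝ, Real.cos φ ≠ 0 → Real.cos θ ≠ 0 →
      b - a * Real.tan φ * Real.tan θ ≠ 0 → Real.sin φ ≠ 0 →
      Real.cos ((Bs (φ, θ)).1) ≠ 0 → Real.sin ((Bs (φ, θ)).1) ≠ 0 →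
      ∃ k : ℤ, (Bs (φ, θ)).2 = -θ + Real.arctan (b / (a * Real.tan φ))
        - Real.arctan (b / (a * Real.tan ((Bs (φ, θ)).1))) + k * Real.pi) :
    (∃ k l : ℤ, Bs (0, Real.pi / 2) = ((k : ℝ) * Real.pi, Real.pi / 2 + l * Real.pi)) ∧
    1 < lam ∧ lam⁻¹ < 1 ∧
    ∃ D : ℝ × ℝ →L[ℝ] ℝ × ℝ, HasFDerivAt Bs D (0, Real.pi / 2) ∧
      Module.End.HasEigenvalue D.toLinearMap lam ∧
      Module.End.HasEigenvalue D.toLinearMap lam⁻¹ := by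
  have ha : 0 < a := hb.trans hab
  have hab2 : (0:ℝ) ≤ a ^ 2 - b ^ 2 := by nlinarith
  have hc2 : c ^ 2 = a ^ 2 - b ^ 2 := by rw [hc]; exact Real.sq_sqrt hab2
  have hc0 : 0 < c := by rw [hc]; apply Real.sqrt_pos.mpr; nlinarith
  have hca : c < a := by nlinarith
  have hlam1 : 1 < lam := by
    rw [hlam, lt_div_iff₀ (by linarith)]; linarith
  have hlaminv : lam⁻¹ < 1 := inv_lt_one_of_one_lt₀ hlam1
  -- the neighborhood U
  have hNz : gN a b zpt ≠ 0 := by rw [gN_z ha hb]; positivity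
  have hcGz : Real.cos (gG a b zpt) ≠ 0 := by rw [gG_z ha hb, Real.cos_pi]; norm_num
  have hev : ∀ᶠ p in nhds zpt, gN a b p ≠ 0 ∧ Real.cos (gG a b p) ≠ 0
      ∧ Real.cos p.1 ≠ 0 := by
    refine Filter.Eventually.and ?_ (Filter.Eventually.and ?_ ?_)
    · exact (cont_gN.continuousAt).eventually_ne hNz
    · exact (Real.continuous_cos.continuousAt.comp (contAt_gG hNz)).eventually_ne hcGz
    · exact ((Real.continuous_cos.comp continuous_fst).continuousAt).eventually_ne
        (by norm_num)
  obtain ⟨r, hr0, hUprop⟩ := Metric.eventually_nhds_iff_ball.mp hev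
  set U := Metric.ball zpt r with hUdef
  have hzU : zpt ∈ U := Metric.mem_ball_self hr0
  have hUo : IsOpen U := Metric.isOpen_ball
  have hUc : IsPreconnected U := (convex_ball zpt r).isPreconnected
  have hwit := witness ha hb hab hr0
  have hdense := dense_good (a := a) (b := b) hr0 hwit
  obtain ⟨q0, hq0U, hq0S⟩ := hwit
  have hSfacts : ∀ q : ℝ × ℝ, Fbad a b q ≠ 0 →
      Real.sin q.1 ≠ 0 ∧ Real.cos q.2 ≠ 0 ∧ gD a b q ≠ 0 ∧ gW a b q ≠ 0 := by
    intro q hq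
    rw [Fbad] at hq
    have h4 := right_ne_zero_of_mul hq
    have h123 := left_ne_zero_of_mul hq
    have h3 := right_ne_zero_of_mul h123
    have h12 := left_ne_zero_of_mul h123
    exact ⟨left_ne_zero_of_mul h12, right_ne_zero_of_mul h12, h3, h4⟩
  -- step 1 : first component
  have contOn_f1 : ContinuousOn (fun p => ((Bs p).1 - gG a b p) / Real.pi) U := by
    apply ContinuousOn.div_const
    apply ContinuousOn.sub
    · exact (continuous_fst.comp hcont).continuousOn
    · exact fun p hp => (contAt_gG (hUprop p hp).1).continuousWithinAt
  have hfk1 : ∀ p ∈ U ∩ {q : ℝ × ℝ | Fbad a b q ≠ 0},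
      ∃ k : ℤ, ((Bs p).1 - gG a b p) / Real.pi = k := by
    intro p hp
    obtain ⟨hsin, hcos2, hgD, hgW⟩ := hSfacts p hp.2
    obtain ⟨hNp, hcGp, hcos1⟩ := hUprop p hp.1
    obtain ⟨k, hk⟩ := hBs1 p.1 p.2 hcos1 hcos2 (tanden_ne ha p hcos1 hcos2 hgD)
    obtain ⟨j, hj⟩ := step1_ident ha hb p hcos1 hcos2 hgD hNp
    refine ⟨j + k, ?_⟩
    have hk' : (Bs p).1 = -p.1 + 2 * Real.arctan (b * (a * Real.tan p.1 + b * Real.tan p.2) /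
        (a * (b - a * Real.tan p.1 * Real.tan p.2))) + (k : ℝ) * Real.pi := hk
    rw [hk', hj]
    field_simp
    push_cast
    ring
  have hconst1 := const_of_int_valued hUo hUc hdense contOn_f1 hfk1 hzU
  obtain ⟨m, hm⟩ := hfk1 q0 ⟨hq0U, hq0S⟩
  have hf1z : ((Bs zpt).1 - gG a b zpt) / Real.pi = m := by
    rw [← hconst1 q0 hq0U]; exact hm
  have hB1 : ∀ p ∈ U, (Bs p).1 = gG a b p + (m : ℝ) * Real.pi := by
    intro p hp
    have h := (hconst1 p hp).trans hf1z
    rw [div_eq_iff Real.pi_ne_zero] at h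
    linarith
  -- step 2 : second component
  have contOn_f2 : ContinuousOn (fun p => ((Bs p).2 - gH a b p) / Real.pi) U := by
    apply ContinuousOn.div_const
    apply ContinuousOn.sub
    · exact (continuous_snd.comp hcont).continuousOn
    · intro p hp
      obtain ⟨hNp, hcGp, hcos1⟩ := hUprop p hp
      exact (contAt_gH hNp hcos1 hcGp).continuousWithinAt
  have hfk2 : ∀ p ∈ U ∩ {q : ℝ × ℝ | Fbad a b q ≠ 0},
      ∃ k : ℤ, ((Bs p).2 - gH a b p) / Real.pi = k := by
    intro p hp
    obtain ⟨hsin, hcos2, hgD, hgW⟩ := hSfacts p hp.2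
    obtain ⟨hNp, hcGp, hcos1⟩ := hUprop p hp.1
    have hsinG : Real.sin (gG a b p) ≠ 0 := by
      rw [sin_gG p hNp]
      apply div_ne_zero hgW
      have h1 : 0 < gN a b p ^ 2 := by positivity
      nlinarith [sq_nonneg (gD a b p)]
    have hB1p := hB1 p hp.1
    have hcB : Real.cos ((Bs p).1) ≠ 0 := by
      rw [hB1p, Real.cos_add_int_mul_pi]
      exact mul_ne_zero (zpow_ne_zero _ (by norm_num)) hcGp
    have hsB : Real.sin ((Bs p).1) ≠ 0 := by
      rw [hB1p, Real.sin_add_int_mul_pi]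
      exact mul_ne_zero (zpow_ne_zero _ (by norm_num)) hsinG
    obtain ⟨k, hk⟩ := hBs2 p.1 p.2 hcos1 hcos2 (tanden_ne ha p hcos1 hcos2 hgD) hsin hcB hsB
    have htB : Real.tan ((Bs p).1) = Real.tan (gG a b p) := by
      rw [hB1p]
      exact (Real.tan_periodic.int_mul m) (gG a b p)
    obtain ⟨j, hj⟩ := step2_ident ha hb p hcos1 hsin hcGp hsinG ((Bs p).1) htB
    refine ⟨j + k, ?_⟩
    have hk' : (Bs p).2 = -p.2 + Real.arctan (b / (a * Real.tan p.1))
        - Real.arctan (b / (a * Real.tan ((Bs p).1))) + (k : ℝ) * Real.pi := hk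
    rw [hk', hj]
    field_simp
    push_cast
    ring
  have hconst2 := const_of_int_valued hUo hUc hdense contOn_f2 hfk2 hzU
  obtain ⟨m', hm'⟩ := hfk2 q0 ⟨hq0U, hq0S⟩
  have hf2z : ((Bs zpt).2 - gH a b zpt) / Real.pi = m' := by
    rw [← hconst2 q0 hq0U]; exact hm'
  have hB2 : ∀ p ∈ U, (Bs p).2 = gH a b p + (m' : ℝ) * Real.pi := by
    intro p hp
    have h := (hconst2 p hp).trans hf2z
    rw [div_eq_iff Real.pi_ne_zero] at h
    linarith
  -- the derivative
  set DG := ((2*a^2/b^2 - 1) • ContinuousLinearMap.fst ℝ ℝ ℝ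
      + (2*a/b) • ContinuousLinearMap.snd ℝ ℝ ℝ) with hDG
  set DH := ((2*a*(a^2-b^2)/b^3) • ContinuousLinearMap.fst ℝ ℝ ℝ
      + (2*a^2/b^2 - 1) • ContinuousLinearMap.snd ℝ ℝ ℝ) with hDH
  set D := DG.prod DH with hD
  have hfdF : HasFDerivAt (fun p => (gG a b p + (m : ℝ) * Real.pi,
      gH a b p + (m' : ℝ) * Real.pi)) D zpt :=
    ((hfd_gG ha hb).add_const _).prodMk ((hfd_gH ha hb).add_const _)
  have hEq : Bs =ᶠ[nhds zpt] (fun p => (gG a b p + (m : ℝ) * Real.pi,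
      gH a b p + (m' : ℝ) * Real.pi)) := by
    filter_upwards [hUo.mem_nhds hzU] with p hp
    exact Prod.ext_iff.mpr ⟨hB1 p hp, hB2 p hp⟩
  have hfdBs : HasFDerivAt Bs D zpt := hfdF.congr_of_eventuallyEq hEq
  have hBz : Bs zpt = (gG a b zpt + (m : ℝ) * Real.pi, gH a b zpt + (m' : ℝ) * Real.pi) :=
    hEq.eq_of_nhds
  -- eigenvector computations
  have hbne : b ≠ 0 := ne_of_gt hb
  have happ : ∀ x y : ℝ, D (x, y) = ((2*a^2/b^2 - 1) * x + (2*a/b) * y,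
      (2*a*(a^2-b^2)/b^3) * x + (2*a^2/b^2 - 1) * y) := by
    intro x y
    rw [hD, hDG, hDH]
    simp only [ContinuousLinearMap.prod_apply, ContinuousLinearMap.add_apply,
      ContinuousLinearMap.smul_apply, ContinuousLinearMap.coe_fst',
      ContinuousLinearMap.coe_snd', smul_eq_mul]
  obtain ⟨hE1, hE2, hE3, hE4⟩ := eig_components hb hc0 hca hc2
  have heig1 : Module.End.HasEigenvalue D.toLinearMap lam := by
    apply Module.End.hasEigenvalue_of_hasEigenvector (x := ((b : ℝ), c))
    refine ⟨Module.End.mem_eigenspace_iff.mpr ?_, ?_⟩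
    · show D (b, c) = lam • ((b : ℝ), c)
      rw [happ b c, hlam, Prod.smul_mk, smul_eq_mul, smul_eq_mul]
      exact Prod.ext_iff.mpr ⟨hE1, hE2⟩
    · intro h
      exact hbne (by simpa using congrArg Prod.fst h)
  have heig2 : Module.End.HasEigenvalue D.toLinearMap lam⁻¹ := by
    have hinv : lam⁻¹ = (a - c) / (a + c) := by rw [hlam, inv_div]
    apply Module.End.hasEigenvalue_of_hasEigenvector (x := ((b : ℝ), -c))
    refine ⟨Module.End.mem_eigenspace_iff.mpr ?_, ?_⟩
    · show D (b, -c) = lam⁻¹ • ((b : ℝ), -c)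
      rw [happ b (-c), hinv, Prod.smul_mk, smul_eq_mul, smul_eq_mul]
      exact Prod.ext_iff.mpr ⟨hE3, hE4⟩
    · intro h
      exact hbne (by simpa using congrArg Prod.fst h)
  refine ⟨⟨m + 1, m' - 1, ?_⟩, hlam1, hlaminv, D, hfdBs, heig1, heig2⟩
  rw [hBz, gG_z ha hb, gH_z ha hb]
  refine Prod.ext_iff.mpr ⟨?_, ?_⟩ <;> · push_cast; ring
end

section
/- Twist property of the time-1 map of the inner Hamiltonian flow (Proposition 4.1, core estimate): let a : ℝ → ℝ be a continuous, strictly positive, periodic function. For every E > 0 and t ∈ ℝ there is a unique t̄ = t̄(E, t) > t satisfying sqrt(E/2) · a(t) · ∫_t^{t̄} a(s)^{−2} ds = 1, the function E ↦ t̄(E, t) is differentiable, and ∂t̄/∂E < 0. -/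
open Filter intervalIntegral

/-- Auxiliary: properties of the primitive of a continuous, positive, periodic function. -/
lemma primitive_props (f : ℝ → ℝ) (hfc : Continuous f) (hfpos : ∀ s, 0 < f s)
    (P : ℝ) (hP : 0 < P) (hfper : Function.Periodic f P) (t : ℝ) :
    StrictMono (fun x => ∫ s in t..x, f s) ∧
    Function.Surjective (fun x => ∫ s in t..x, f s) ∧
    (∀ x : ℝ, HasDerivAt (fun x => ∫ s in t..x, f s) (f x) x) := by
  have hint : ∀ u v : ℝ, IntervalIntegrable f MeasureTheory.volume u v :=
    fun u v => hfc.intervalIntegrable u v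
  have hmono : StrictMono (fun x => ∫ s in t..x, f s) := by
    intro x y hxy
    have hadd := integral_add_adjacent_intervals (hint t x) (hint x y)
    have hpos : 0 < ∫ s in x..y, f s :=
      intervalIntegral_pos_of_pos (hint x y) hfpos hxy
    simp only
    linarith
  have hderiv : ∀ x : ℝ, HasDerivAt (fun x => ∫ s in t..x, f s) (f x) x :=
    fun x => (hfc.integral_hasStrictDerivAt t x).hasDerivAt
  refine ⟨hmono, ?_, hderiv⟩
  -- surjectivity
  have hcont : Continuous (fun x => ∫ s in t..x, f s) :=
    continuous_primitive hint t
  have htop0 : Tendsto (fun x => ∫ s in (0:ℝ)..x, f s) atTop atTop :=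
    hfper.tendsto_atTop_intervalIntegral_of_pos' (hint 0 P) hfpos hP
  have hbot0 : Tendsto (fun x => ∫ s in (0:ℝ)..x, f s) atBot atBot :=
    hfper.tendsto_atBot_intervalIntegral_of_pos' (hint 0 P) hfpos hP
  have hsplit : ∀ x : ℝ, (∫ s in t..x, f s) = (∫ s in (0:ℝ)..x, f s) - ∫ s in (0:ℝ)..t, f s := by
    intro x
    have := integral_add_adjacent_intervals (hint 0 t) (hint t x)
    linarith
  have htop : Tendsto (fun x => ∫ s in t..x, f s) atTop atTop := by
    simp only [hsplit]
    exact htop0.atTop_add tendsto_const_nhds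
  have hbot : Tendsto (fun x => ∫ s in t..x, f s) atBot atBot := by
    simp only [hsplit]
    exact hbot0.atBot_add tendsto_const_nhds
  exact hcont.surjective htop hbot

/-- twist property of the time-1 map of the inner Hamiltonian flow.
For a continuous, strictly positive, periodic function `a`, for every `E > 0` and
`t` there is a unique `t̄ > t` with `sqrt(E/2) · a(t) · ∫_t^{t̄} a(s)⁻² ds = 1`;
the function `E ↦ t̄(E, t)` is differentiable and `∂t̄/∂E < 0`. -/
theorem inner_map_twist
    (a : ℝ → ℝ) (ha : Continuous a) (hapos : ∀ t, 0 < a t)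
    (P : ℝ) (hP : 0 < P) (haper : Function.Periodic a P) :
    (∀ E : ℝ, 0 < E → ∀ t : ℝ,
      ∃! tb : ℝ, t < tb ∧ Real.sqrt (E / 2) * a t * ∫ s in t..tb, (a s ^ 2)⁻¹ = 1) ∧
    (∀ (t : ℝ) (T : ℝ → ℝ),
      (∀ E : ℝ, 0 < E →
        t < T E ∧ Real.sqrt (E / 2) * a t * ∫ s in t..(T E), (a s ^ 2)⁻¹ = 1) →
      ∀ E : ℝ, 0 < E → ∃ d : ℝ, d < 0 ∧ HasDerivAt T d E) := by
  set f : ℝ → ℝ := fun s => (a s ^ 2)⁻¹ with hf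
  have hfpos : ∀ s, 0 < f s := fun s => inv_pos.2 (pow_pos (hapos s) 2)
  have hfc : Continuous f := (ha.pow 2).inv₀ (fun s => (pow_pos (hapos s) 2).ne')
  have hfper : Function.Periodic f P := fun s => by simp [hf, haper s]
  -- for each base point t, the primitive F t
  have props := fun t => primitive_props f hfc hfpos P hP hfper t
  -- coefficient positivity
  have hcoef : ∀ E : ℝ, 0 < E → ∀ t : ℝ, 0 < Real.sqrt (E / 2) * a t := by
    intro E hE t
    exact mul_pos (Real.sqrt_pos.2 (by linarith)) (hapos t)
  constructor
  · -- existence and uniqueness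
    intro E hE t
    obtain ⟨hmono, hsurj, _⟩ := props t
    have hc := hcoef E hE t
    obtain ⟨tb, htb⟩ := hsurj (Real.sqrt (E / 2) * a t)⁻¹
    have hFt : (∫ s in t..t, f s) = 0 := intervalIntegral.integral_same
    have htb' : (∫ s in t..tb, f s) = (Real.sqrt (E / 2) * a t)⁻¹ := htb
    refine ⟨tb, ⟨?_, ?_⟩, ?_⟩
    · -- t < tb since F tb > 0 = F t
      have hp : (0:ℝ) < ∫ s in t..tb, f s := by rw [htb']; positivity
      by_contra hle
      push_neg at hle
      have := hmono.monotone hle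
      simp only [hFt] at this
      linarith
    · rw [htb']; exact mul_inv_cancel₀ hc.ne'
    · rintro y ⟨-, hy⟩
      apply hmono.injective
      have h1 : (∫ s in t..y, f s) = (Real.sqrt (E / 2) * a t)⁻¹ :=
        eq_inv_of_mul_eq_one_right hy
      show (∫ s in t..y, f s) = (∫ s in t..tb, f s)
      rw [h1, htb']
  · -- differentiability and negative derivative
    intro t T hT E hE
    obtain ⟨hmono, hsurj, hderiv⟩ := props t
    -- the order isomorphism given by F
    set e := StrictMono.orderIsoOfSurjective _ hmono hsurj with he
    set g : ℝ → ℝ := fun y => e.symm y with hg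
    have hFg : ∀ y : ℝ, (∫ s in t..(g y), f s) = y := fun y => e.apply_symm_apply y
    have hgcont : Continuous g := (e.symm : ℝ ≃o ℝ).continuous
    -- the target function c
    set c : ℝ → ℝ := fun E => (Real.sqrt (E / 2) * a t)⁻¹ with hc
    -- derivative of c at E
    have h1 : HasDerivAt (fun E : ℝ => E / 2) (1 / 2) E := (hasDerivAt_id E).div_const 2
    have hE2 : (0:ℝ) < E / 2 := by linarith
    have h2 : HasDerivAt Real.sqrt (1 / (2 * Real.sqrt (E / 2))) (E / 2) :=
      Real.hasDerivAt_sqrt hE2.ne'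
    have h3 : HasDerivAt (fun E : ℝ => Real.sqrt (E / 2))
        (1 / (2 * Real.sqrt (E / 2)) * (1 / 2)) E := h2.comp E h1
    have h4 : HasDerivAt (fun E : ℝ => Real.sqrt (E / 2) * a t)
        (1 / (2 * Real.sqrt (E / 2)) * (1 / 2) * a t) E := h3.mul_const (a t)
    have hcE : 0 < Real.sqrt (E / 2) * a t := hcoef E hE t
    have h5 : HasDerivAt c
        (-(1 / (2 * Real.sqrt (E / 2)) * (1 / 2) * a t) / (Real.sqrt (E / 2) * a t) ^ 2) E :=
      h4.inv hcE.ne'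
    have hc'neg : -(1 / (2 * Real.sqrt (E / 2)) * (1 / 2) * a t) / (Real.sqrt (E / 2) * a t) ^ 2 < 0 := by
      apply div_neg_of_neg_of_pos
      · have h6 : 0 < Real.sqrt (E / 2) := Real.sqrt_pos.2 hE2
        have := hapos t
        nlinarith [mul_pos (mul_pos (by positivity : (0:ℝ) < 1 / (2 * Real.sqrt (E / 2))) (by norm_num : (0:ℝ) < 1/2)) (hapos t)]
      · positivity
    -- derivative of g at c E
    have hgd : HasDerivAt g (f (g (c E)))⁻¹ (c E) := by
      apply HasDerivAt.of_local_left_inverse (hgcont.continuousAt) (hderiv (g (c E)))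
        (hfpos _).ne'
      exact Eventually.of_forall hFg
    -- derivative of g ∘ c
    have hgc : HasDerivAt (fun E => g (c E))
        ((f (g (c E)))⁻¹ * (-(1 / (2 * Real.sqrt (E / 2)) * (1 / 2) * a t) / (Real.sqrt (E / 2) * a t) ^ 2)) E :=
      hgd.comp E h5
    -- T agrees with g ∘ c on (0, ∞)
    have hagree : ∀ E' : ℝ, 0 < E' → T E' = g (c E') := by
      intro E' hE'
      obtain ⟨hlt, heq⟩ := hT E' hE'
      apply hmono.injective
      have hc' : 0 < Real.sqrt (E' / 2) * a t := hcoef E' hE' t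
      have h7 : (∫ s in t..(T E'), f s) = c E' := eq_inv_of_mul_eq_one_right heq
      show (∫ s in t..(T E'), f s) = (∫ s in t..(g (c E')), f s)
      rw [h7, hFg (c E')]
    have hev : T =ᶠ[nhds E] fun E => g (c E) := by
      filter_upwards [isOpen_Ioi.mem_nhds (Set.mem_Ioi.2 hE)] with E' hE'
      exact hagree E' hE'
    refine ⟨_, ?_, hgc.congr_of_eventuallyEq hev⟩
    exact mul_neg_of_pos_of_neg (inv_pos.2 (hfpos _)) hc'neg
end

section
/- Flow-time formula along level curves of the inner Hamiltonian: let a : ℝ → ℝ be C¹ and strictly positive, and let (t(s), E(s)) be a differentiable solution of dt/ds = sqrt(2) a(t)/sqrt(E), dE/ds = −2 sqrt(2E) a'(t) with E(s) > 0, defined for s ∈ [s₀, s₁]. Then s₁ − s₀ = sqrt(E(s₀)/2) · a(t(s₀)) · ∫_{t(s₀)}^{t(s₁)} a(τ)^{−2} dτ. -/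
lemma const_on_Icc_of_deriv_zero {f : ℝ → ℝ} {s₀ s₁ : ℝ}
    (h : ∀ s ∈ Set.Icc s₀ s₁, HasDerivWithinAt f 0 (Set.Icc s₀ s₁) s) :
    ∀ s ∈ Set.Icc s₀ s₁, f s = f s₀ := by
  have hcont : ContinuousOn f (Set.Icc s₀ s₁) := fun s hs => (h s hs).continuousWithinAt
  refine constant_of_has_deriv_right_zero hcont ?_
  intro x hx
  exact (h x ⟨hx.1, hx.2.le⟩).mono_of_mem_nhdsWithin (Icc_mem_nhdsGE_of_mem hx)

/-- flow-time formula along level curves of the inner Hamiltonian.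
For a solution `(t(s), E(s))`, `s ∈ [s₀, s₁]`, of `dt/ds = sqrt 2 · a(t)/sqrt E`,
`dE/ds = −2 sqrt(2E) a'(t)` with `E > 0`, one has
`s₁ − s₀ = sqrt(E(s₀)/2) · a(t(s₀)) · ∫_{t(s₀)}^{t(s₁)} a(τ)⁻² dτ`. -/
theorem inner_flow_time_formula
    (a : ℝ → ℝ) (ha : ContDiff ℝ 1 a) (hapos : ∀ τ, 0 < a τ)
    (s₀ s₁ : ℝ) (hs : s₀ ≤ s₁)
    (t E : ℝ → ℝ)
    (hEpos : ∀ s ∈ Set.Icc s₀ s₁, 0 < E s)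
    (ht : ∀ s ∈ Set.Icc s₀ s₁,
      HasDerivWithinAt t (Real.sqrt 2 * a (t s) / Real.sqrt (E s)) (Set.Icc s₀ s₁) s)
    (hE : ∀ s ∈ Set.Icc s₀ s₁,
      HasDerivWithinAt E (-2 * Real.sqrt (2 * E s) * deriv a (t s)) (Set.Icc s₀ s₁) s) :
    s₁ - s₀ = Real.sqrt (E s₀ / 2) * a (t s₀) * ∫ τ in (t s₀)..(t s₁), (a τ ^ 2)⁻¹ := by
  have hs₀ : s₀ ∈ Set.Icc s₀ s₁ := ⟨le_rfl, hs⟩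
  have hs₁ : s₁ ∈ Set.Icc s₀ s₁ := ⟨hs, le_rfl⟩
  have ha' : ∀ x, HasDerivAt a (deriv a x) x :=
    fun x => (ha.differentiable one_ne_zero x).hasDerivAt
  -- derivative of a ∘ t
  have hat : ∀ s ∈ Set.Icc s₀ s₁,
      HasDerivWithinAt (fun s => a (t s))
        (deriv a (t s) * (Real.sqrt 2 * a (t s) / Real.sqrt (E s))) (Set.Icc s₀ s₁) s :=
    fun s hmem => (ha' (t s)).comp_hasDerivWithinAt s (ht s hmem)
  -- derivative of sqrt ∘ E
  have hsqrtE : ∀ s ∈ Set.Icc s₀ s₁,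
      HasDerivWithinAt (fun s => Real.sqrt (E s))
        (1 / (2 * Real.sqrt (E s)) * (-2 * Real.sqrt (2 * E s) * deriv a (t s)))
        (Set.Icc s₀ s₁) s :=
    fun s hmem => (Real.hasDerivAt_sqrt (ne_of_gt (hEpos s hmem))).comp_hasDerivWithinAt s (hE s hmem)
  -- conservation: sqrt(E) * a(t) is constant
  have hF0 : ∀ s ∈ Set.Icc s₀ s₁,
      HasDerivWithinAt (fun s => Real.sqrt (E s) * a (t s)) 0 (Set.Icc s₀ s₁) s := by
    intro s hmem
    have h := (hsqrtE s hmem).mul (hat s hmem)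
    have hE' := hEpos s hmem
    have hr : Real.sqrt (E s) > 0 := Real.sqrt_pos.mpr hE'
    have h2E : Real.sqrt (2 * E s) = Real.sqrt 2 * Real.sqrt (E s) :=
      Real.sqrt_mul (by norm_num) _
    convert h using 1
    case e'_4 => rfl
    case e'_5 => rfl
    case e'_8 => rfl
    rw [h2E]
    field_simp
    ring
  have hconst := const_on_Icc_of_deriv_zero hF0
  set c := Real.sqrt (E s₀) * a (t s₀) with hc
  have hcpos : 0 < c := mul_pos (Real.sqrt_pos.mpr (hEpos s₀ hs₀)) (hapos _)
  -- FTC : derivative of the primitive of (a τ^2)⁻¹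
  have hg : Continuous (fun τ => (a τ ^ 2)⁻¹) :=
    ((ha.continuous.pow 2)).inv₀ (fun τ => pow_ne_zero 2 (ne_of_gt (hapos τ)))
  have hΦ : ∀ x, HasDerivAt (fun y => ∫ τ in (t s₀)..y, (a τ ^ 2)⁻¹) ((a x ^ 2)⁻¹) x := by
    intro x
    exact intervalIntegral.integral_hasDerivAt_right
      (hg.intervalIntegrable _ _)
      (hg.stronglyMeasurableAtFilter _ _)
      hg.continuousAt
  -- Ψ s = Φ(t s) - (√2/c)(s - s₀) has zero derivative
  have hΨ : ∀ s ∈ Set.Icc s₀ s₁,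
      HasDerivWithinAt
        (fun s => (∫ τ in (t s₀)..(t s), (a τ ^ 2)⁻¹) - (Real.sqrt 2 / c) * (s - s₀))
        0 (Set.Icc s₀ s₁) s := by
    intro s hmem
    have h1 : HasDerivWithinAt (fun s => ∫ τ in (t s₀)..(t s), (a τ ^ 2)⁻¹)
        ((a (t s) ^ 2)⁻¹ * (Real.sqrt 2 * a (t s) / Real.sqrt (E s))) (Set.Icc s₀ s₁) s :=
      (hΦ (t s)).comp_hasDerivWithinAt s (ht s hmem)
    have h2 : HasDerivWithinAt (fun s : ℝ => (Real.sqrt 2 / c) * (s - s₀))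
        (Real.sqrt 2 / c) (Set.Icc s₀ s₁) s := by
      simpa using (((hasDerivWithinAt_id s (Set.Icc s₀ s₁)).sub_const s₀).const_mul (Real.sqrt 2 / c))
    have h3 := h1.sub h2
    convert h3 using 1
    case e'_4 => rfl
    case e'_5 => rfl
    case e'_8 => rfl
    have hcs : Real.sqrt (E s) * a (t s) = c := hconst s hmem
    have hr : Real.sqrt (E s) > 0 := Real.sqrt_pos.mpr (hEpos s hmem)
    have hap : 0 < a (t s) := hapos _
    rw [← hcs]
    field_simp
    ring
  have hΨconst := const_on_Icc_of_deriv_zero hΨ s₁ hs₁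
  simp only [intervalIntegral.integral_same, sub_zero, zero_sub] at hΨconst
  -- hΨconst : Φ(t s₁) - (√2/c)(s₁ - s₀) = - (√2/c)(s₀ - s₀) = 0 (careful)
  have key : (∫ τ in (t s₀)..(t s₁), (a τ ^ 2)⁻¹) = (Real.sqrt 2 / c) * (s₁ - s₀) := by
    have := hΨconst
    simp at this
    linarith [this]
  rw [key]
  have h2 : Real.sqrt (E s₀ / 2) = Real.sqrt (E s₀) / Real.sqrt 2 :=
    Real.sqrt_div (hEpos s₀ hs₀).le 2
  rw [h2]
  have hs2 : (0:ℝ) < Real.sqrt 2 := Real.sqrt_pos.mpr (by norm_num)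
  field_simp
  ring
end

section
/- For every real λ > 1 and x > 0, the doubly infinite series ∑_{n ∈ ℤ} λ^{2n} x / ( (λ^{2n} x + λ²)(λ^{2n} x + 1) ) converges absolutely and its sum equals 1/(λ² − 1). -/
open Filter Finset

/-- for `λ > 1` and `x > 0`, the doubly infinite series
`∑_{n ∈ ℤ} λ^{2n} x / ((λ^{2n} x + λ²)(λ^{2n} x + 1))` converges absolutely
and its sum equals `1/(λ² − 1)`. -/
theorem telescoping_series_two
    (lam x : ℝ) (hlam : 1 < lam) (hx : 0 < x) :
    Summable (fun n : ℤ =>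
      |lam ^ (2 * n) * x / ((lam ^ (2 * n) * x + lam ^ 2) * (lam ^ (2 * n) * x + 1))|) ∧
    ∑' n : ℤ, lam ^ (2 * n) * x / ((lam ^ (2 * n) * x + lam ^ 2) * (lam ^ (2 * n) * x + 1))
      = 1 / (lam ^ 2 - 1) := by
  have hl0 : (0:ℝ) < lam := lt_trans one_pos hlam
  have hlne : lam ≠ 0 := ne_of_gt hl0
  have hl2 : (1:ℝ) < lam ^ 2 := one_lt_pow₀ hlam (by norm_num)
  have hden : lam ^ 2 - 1 ≠ 0 := sub_ne_zero.2 (ne_of_gt hl2)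
  set t : ℤ → ℝ := fun n =>
    lam ^ (2 * n) * x / ((lam ^ (2 * n) * x + lam ^ 2) * (lam ^ (2 * n) * x + 1)) with ht
  set g : ℤ → ℝ := fun n => (lam ^ (2 * n) * x + 1)⁻¹ with hg
  have hzpos : ∀ n : ℤ, 0 < lam ^ (2 * n) := fun n => zpow_pos hl0 _
  have hpos1 : ∀ n : ℤ, 0 < lam ^ (2 * n) * x + 1 := fun n => by
    have := hzpos n; positivity
  have htpos : ∀ n : ℤ, 0 ≤ t n := fun n => by
    have h1 := hzpos n; have h2 := hpos1 n
    have : 0 < lam ^ (2 * n) * x + lam ^ 2 := by positivity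
    simp only [ht]
    positivity
  -- key telescoping identity
  have key : ∀ n : ℤ, t n = (g (n - 1) - g n) / (lam ^ 2 - 1) := by
    intro n
    have hz : lam ^ (2 * n) = lam ^ (2 * (n - 1)) * lam ^ 2 := by
      rw [← zpow_natCast lam 2, ← zpow_add₀ hlne]; ring_nf
    simp only [ht, hg]
    have h1 : 0 < lam ^ (2 * (n - 1)) := hzpos _
    have h2 : 0 < lam ^ (2 * (n - 1)) * x + 1 := hpos1 _
    rw [hz]
    have hA : lam ^ (2*(n-1)) * lam ^ 2 * x + lam ^ 2 ≠ 0 := by positivity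
    have hB : lam ^ (2*(n-1)) * lam ^ 2 * x + 1 ≠ 0 := by positivity
    field_simp
    ring
  -- g (k + c) → 0 as k → ∞ (k : ℕ)
  have haux : ∀ c : ℤ, Tendsto (fun k : ℕ => g ((k:ℤ) + c)) atTop (nhds 0) := by
    intro c
    have hA : Tendsto (fun k : ℕ => lam ^ (2 * ((k:ℤ) + c)) * x + 1) atTop atTop := by
      apply tendsto_atTop_add_const_right
      have h1 : Tendsto (fun k : ℕ => (lam ^ 2) ^ k) atTop atTop :=
        tendsto_pow_atTop_atTop_of_one_lt hl2
      have h2 := h1.atTop_mul_const (show 0 < lam ^ (2 * c) * x by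
        have := zpow_pos hl0 (2 * c); positivity)
      refine h2.congr (fun k => ?_)
      rw [← zpow_natCast (lam ^ 2) k, ← zpow_natCast lam 2, ← zpow_mul,
        ← mul_assoc, ← zpow_add₀ hlne]
      ring_nf
    simpa [hg, Pi.inv_def] using hA.inv_tendsto_atTop
  -- g (-(k) - 1) → 1 as k → ∞
  have hgbot : Tendsto (fun k : ℕ => g (-(k:ℤ) - 1)) atTop (nhds 1) := by
    have h2 : Tendsto (fun k : ℕ => lam ^ (2 * (-(k:ℤ) - 1))) atTop (nhds 0) := by
      have hb : |(lam ^ 2)⁻¹| < 1 := by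
        rw [abs_inv, abs_of_pos (by positivity)]
        exact inv_lt_one_of_one_lt₀ hl2
      have h3 := (tendsto_pow_atTop_nhds_zero_of_abs_lt_one hb).mul_const ((lam ^ 2)⁻¹)
      rw [zero_mul] at h3
      refine h3.congr (fun k => ?_)
      have hinv : ((lam : ℝ) ^ 2)⁻¹ = lam ^ (-2 : ℤ) := by
        rw [zpow_neg, ← zpow_natCast lam 2]
        norm_num
      rw [hinv, ← zpow_natCast (lam ^ (-2:ℤ)) k, ← zpow_mul, ← zpow_add₀ hlne]
      ring_nf
    have h4 : Tendsto (fun k : ℕ => lam ^ (2 * (-(k:ℤ) - 1)) * x + 1) atTop (nhds 1) := by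
      have := (h2.mul_const x).add_const 1
      simpa using this
    have := h4.inv₀ (by norm_num)
    simpa [hg] using this
  -- nonneg part
  have hnat : HasSum (fun k : ℕ => t k) (g (-1) / (lam ^ 2 - 1)) := by
    rw [hasSum_iff_tendsto_nat_of_nonneg (fun k => htpos k)]
    have hsum : ∀ N : ℕ, ∑ k ∈ range N, t k = (g (-1) - g ((N:ℤ) + (-1))) / (lam ^ 2 - 1) := by
      intro N
      induction N with
      | zero => simp
      | succ m ih =>
        rw [Finset.sum_range_succ, ih, key m]
        push_cast
        ring_nf
    simp only [hsum]
    have := ((haux (-1)).const_sub (g (-1))).div_const (lam ^ 2 - 1)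
    simpa using this
  -- negative part
  have hneg : HasSum (fun k : ℕ => t (-((k:ℤ) + 1))) ((1 - g (-1)) / (lam ^ 2 - 1)) := by
    rw [hasSum_iff_tendsto_nat_of_nonneg (fun k => htpos _)]
    have hsum : ∀ N : ℕ, ∑ k ∈ range N, t (-((k:ℤ) + 1))
        = (g (-(N:ℤ) - 1) - g (-1)) / (lam ^ 2 - 1) := by
      intro N
      induction N with
      | zero => simp
      | succ m ih =>
        rw [Finset.sum_range_succ, ih, key (-((m:ℤ) + 1))]
        push_cast
        ring_nf
    simp only [hsum]
    have := (hgbot.sub_const (g (-1))).div_const (lam ^ 2 - 1)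
    simpa using this
  have hZ : HasSum t (g (-1) / (lam ^ 2 - 1) + (1 - g (-1)) / (lam ^ 2 - 1)) :=
    hnat.of_nat_of_neg_add_one hneg
  have hval : g (-1) / (lam ^ 2 - 1) + (1 - g (-1)) / (lam ^ 2 - 1) = 1 / (lam ^ 2 - 1) := by
    field_simp
    ring
  rw [hval] at hZ
  constructor
  · have := hZ.summable
    refine this.abs.congr (fun n => ?_) <;> rfl
  · exact hZ.tsum_eq
end

section
/- Energy component of the truncated scattering map (formula (39)): let a > b > 0 be constants, c = sqrt(a² − b²), λ = (a+c)/(a−c), and let da, db ∈ ℝ be arbitrary (the time derivatives of the semi-axes at the frozen time). For ξ₀ > 0 put ξ_n = λⁿ ξ₀ for n ∈ ℤ. Then the series ∑_{n ∈ ℤ} [ λ ( da · b (1 − ξ_n²)² + 4 a · db · ξ_n² ) / ( b (ξ_n² + λ)(λ ξ_n² + 1) ) − da ] converges absolutely and its sum equals (b · db − a · da)/c. -/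
open Filter Topology

/-- energy component of the truncated scattering map.  With
`ξ_n = λⁿ ξ₀`, the series
`∑_{n ∈ ℤ} [ λ(da·b(1−ξ_n²)² + 4a·db·ξ_n²) / (b(ξ_n²+λ)(λξ_n²+1)) − da ]`
converges absolutely and its sum equals `(b·db − a·da)/c`. -/
theorem scattering_map_energy_component
    (a b : ℝ) (hb : 0 < b) (hab : b < a)
    (c lam : ℝ) (hc : c = Real.sqrt (a ^ 2 - b ^ 2)) (hlam : lam = (a + c) / (a - c))
    (da db : ℝ) (ξ₀ : ℝ) (hξ₀ : 0 < ξ₀) :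
    Summable (fun n : ℤ =>
      |lam * (da * b * (1 - (lam ^ n * ξ₀) ^ 2) ^ 2 + 4 * a * db * (lam ^ n * ξ₀) ^ 2) /
        (b * ((lam ^ n * ξ₀) ^ 2 + lam) * (lam * (lam ^ n * ξ₀) ^ 2 + 1)) - da|) ∧
    ∑' n : ℤ,
      (lam * (da * b * (1 - (lam ^ n * ξ₀) ^ 2) ^ 2 + 4 * a * db * (lam ^ n * ξ₀) ^ 2) /
        (b * ((lam ^ n * ξ₀) ^ 2 + lam) * (lam * (lam ^ n * ξ₀) ^ 2 + 1)) - da)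
      = (b * db - a * da) / c := by
  have ha : 0 < a := lt_trans hb hab
  have hab2 : (0:ℝ) < a ^ 2 - b ^ 2 := by nlinarith
  have hc2 : c ^ 2 = a ^ 2 - b ^ 2 := by rw [hc]; exact Real.sq_sqrt hab2.le
  have hc0 : 0 < c := by rw [hc]; exact Real.sqrt_pos.mpr hab2
  have hca : c < a := by nlinarith
  have hac : 0 < a - c := by linarith
  have hl1 : 1 < lam := by rw [hlam, lt_div_iff₀ hac]; linarith
  have hl0 : 0 < lam := by linarith
  have hb2 : b ^ 2 = a ^ 2 - c ^ 2 := by rw [hc2]; ring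
  set F : ℤ → ℝ := fun n => lam / ((lam ^ n * ξ₀) ^ 2 + lam) with hF
  set C : ℝ := (b * db - a * da) / c with hCdef
  have hxpos : ∀ n : ℤ, 0 < (lam ^ n * ξ₀) ^ 2 := by
    intro n
    have := zpow_pos hl0 n
    positivity
  -- the constant C expressed through lam
  have hl21 : (0:ℝ) < lam ^ 2 - 1 := by nlinarith
  have hCeq : (4 * lam * a * db - da * b * (lam + 1) ^ 2) / (b * (lam ^ 2 - 1)) = C := by
    rw [hCdef, div_eq_div_iff (by positivity) (ne_of_gt hc0)]
    rw [hlam]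
    field_simp
    linear_combination (-(4*a*c*db)) * hb2
  -- key pointwise identity
  have key : ∀ n : ℤ,
      lam * (da * b * (1 - (lam ^ n * ξ₀) ^ 2) ^ 2 + 4 * a * db * (lam ^ n * ξ₀) ^ 2) /
        (b * ((lam ^ n * ξ₀) ^ 2 + lam) * (lam * (lam ^ n * ξ₀) ^ 2 + 1)) - da
      = C * (F n - F (n + 1)) := by
    intro n
    have hx : 0 < (lam ^ n * ξ₀) ^ 2 := hxpos n
    set x : ℝ := (lam ^ n * ξ₀) ^ 2 with hxdef
    have hx1 : (lam ^ (n + 1) * ξ₀) ^ 2 = lam ^ 2 * x := by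
      rw [hxdef, zpow_add_one₀ (ne_of_gt hl0)]; ring
    have hFn1 : F (n + 1) = lam / (lam ^ 2 * x + lam) := by
      simp only [hF, hx1]
    have hFn : F n = lam / (x + lam) := rfl
    rw [hFn, hFn1, ← hCeq]
    have d1 : x + lam ≠ 0 := by positivity
    have d2 : lam * x + 1 ≠ 0 := by positivity
    have d3 : lam ^ 2 * x + lam ≠ 0 := by positivity
    have d4 : lam ^ 2 - 1 ≠ 0 := ne_of_gt hl21
    field_simp
    ring
  -- F is antitone step-wise
  have hFnonneg : ∀ n : ℤ, 0 ≤ F n - F (n + 1) := by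
    intro n
    have hx : 0 < (lam ^ n * ξ₀) ^ 2 := hxpos n
    have hx1 : (lam ^ (n + 1) * ξ₀) ^ 2 = lam ^ 2 * (lam ^ n * ξ₀) ^ 2 := by
      rw [zpow_add_one₀ (ne_of_gt hl0)]; ring
    have h1 : (0:ℝ) < (lam ^ n * ξ₀) ^ 2 + lam := by positivity
    have h2 : (0:ℝ) < (lam ^ (n + 1) * ξ₀) ^ 2 + lam := by
      have := hxpos (n + 1); positivity
    have hle : F (n + 1) ≤ F n := by
      apply div_le_div_of_nonneg_left hl0.le h1
      rw [hx1]; nlinarith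
    linarith
  -- positive part: telescoping sum equals F 0
  have hFnat0 : Tendsto (fun n : ℕ => F n) atTop (nhds 0) := by
    have h1 : Tendsto (fun n : ℕ => (lam ^ 2) ^ n * ξ₀ ^ 2 + lam) atTop atTop := by
      apply Filter.tendsto_atTop_add_const_right
      exact (tendsto_pow_atTop_atTop_of_one_lt (by nlinarith : (1:ℝ) < lam ^ 2)).atTop_mul_const
        (by positivity)
    have h2 : Tendsto (fun n : ℕ => lam / ((lam ^ 2) ^ n * ξ₀ ^ 2 + lam)) atTop (nhds 0) :=
      Filter.Tendsto.div_atTop tendsto_const_nhds h1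
    refine h2.congr (fun n => ?_)
    simp only [hF, zpow_natCast]
    congr 1
    ring
  have hpos : HasSum (fun n : ℕ => F n - F ((n : ℤ) + 1)) (F 0) := by
    rw [hasSum_iff_tendsto_nat_of_nonneg (fun i => hFnonneg i) _]
    have heq : ∀ n : ℕ, ∑ i ∈ Finset.range n, (F i - F ((i : ℤ) + 1)) = F 0 - F n := by
      intro n
      have := Finset.sum_range_sub' (fun i : ℕ => F i) n
      simpa [Nat.cast_add, Nat.cast_one] using this
    simp only [heq]
    simpa using tendsto_const_nhds.sub hFnat0
  -- negative part
  have hFnegn : Tendsto (fun n : ℕ => F (-(n : ℤ))) atTop (nhds 1) := by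
    have h0 : Tendsto (fun n : ℕ => ((lam⁻¹) ^ 2) ^ n) atTop (nhds 0) := by
      apply tendsto_pow_atTop_nhds_zero_of_lt_one (by positivity)
      rw [inv_pow]
      exact inv_lt_one_of_one_lt₀ (by nlinarith)
    have h1 : Tendsto (fun n : ℕ => ((lam⁻¹ ^ 2) ^ n * ξ₀ ^ 2 + lam)) atTop (nhds lam) := by
      simpa using (h0.mul_const (ξ₀ ^ 2)).add_const lam
    have h2 : Tendsto (fun n : ℕ => lam / ((lam⁻¹ ^ 2) ^ n * ξ₀ ^ 2 + lam)) atTop (nhds 1) := by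
      have := (tendsto_const_nhds (x := lam)).div h1 (ne_of_gt hl0)
      rw [div_self (ne_of_gt hl0)] at this; exact this
    refine h2.congr (fun n => ?_)
    simp only [hF, zpow_neg, zpow_natCast]
    congr 1
    ring
  have hneg : HasSum (fun n : ℕ => F (-((n : ℤ) + 1)) - F (-((n : ℤ) + 1) + 1)) (1 - F 0) := by
    rw [hasSum_iff_tendsto_nat_of_nonneg (fun i => hFnonneg _) _]
    have heq : ∀ n : ℕ, ∑ i ∈ Finset.range n,
        (F (-((i : ℤ) + 1)) - F (-((i : ℤ) + 1) + 1)) = F (-(n : ℤ)) - F 0 := by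
      intro n
      have h3 := Finset.sum_range_sub (fun i : ℕ => F (-(i : ℤ))) n
      simp only [Nat.cast_zero, neg_zero] at h3
      rw [← h3]
      apply Finset.sum_congr rfl
      intro i _
      have e1 : (-((i : ℤ) + 1)) = -((i + 1 : ℕ) : ℤ) := by push_cast; ring
      have e2 : (-((i : ℤ) + 1) + 1) = -(i : ℤ) := by ring
      rw [e2, e1]
    simp only [heq]
    simpa using hFnegn.sub tendsto_const_nhds
  have hT : HasSum (fun n : ℤ => F n - F (n + 1)) 1 := by
    have h := HasSum.of_nat_of_neg_add_one (f := fun n : ℤ => F n - F (n + 1)) hpos hneg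
    have e : F 0 + (1 - F 0) = 1 := by ring
    rwa [e] at h
  have hsum : HasSum (fun n : ℤ =>
      lam * (da * b * (1 - (lam ^ n * ξ₀) ^ 2) ^ 2 + 4 * a * db * (lam ^ n * ξ₀) ^ 2) /
        (b * ((lam ^ n * ξ₀) ^ 2 + lam) * (lam * (lam ^ n * ξ₀) ^ 2 + 1)) - da) C := by
    have h := hT.mul_left C
    rw [mul_one] at h
    have e : (fun n : ℤ =>
        lam * (da * b * (1 - (lam ^ n * ξ₀) ^ 2) ^ 2 + 4 * a * db * (lam ^ n * ξ₀) ^ 2) /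
          (b * ((lam ^ n * ξ₀) ^ 2 + lam) * (lam * (lam ^ n * ξ₀) ^ 2 + 1)) - da)
        = fun n : ℤ => C * (F n - F (n + 1)) := funext key
    rw [e]
    exact h
  constructor
  · have hs : Summable (fun n : ℤ => |C| * (F n - F (n + 1))) :=
      hT.summable.mul_left |C|
    refine hs.congr (fun n => ?_)
    rw [key n, abs_mul, abs_of_nonneg (hFnonneg n)]
  · exact hsum.tsum_eq
end

section
/- Time component of the truncated scattering map (formula (40)): let a > b > 0 be constants, c = sqrt(a² − b²), λ = (a+c)/(a−c). For ξ₀ > 0 put ξ_n = λⁿ ξ₀ for n ∈ ℤ. Then the series ∑_{n ∈ ℤ} [ 2a − 2a (λ + ξ_n²)² / ( (λ² + ξ_n²)(1 + ξ_n²) ) ] converges absolutely and its sum equals 2c. (Equivalently: the total defect between the homoclinic flight lengths and the period-two flight length 2a equals 2c, twice the focal half-distance.) -/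
private lemma scat_aux (a c lam x : ℝ) (hl : 0 < lam)
    (key : a * (lam - 1) = c * (lam + 1)) :
    2 * a - 2 * a * (lam + x ^ 2) ^ 2 / ((lam ^ 2 + x ^ 2) * (1 + x ^ 2))
      = 2 * c / (1 + (x / lam) ^ 2) - 2 * c / (1 + x ^ 2) := by
  have h1 : (0:ℝ) < lam ^ 2 + x ^ 2 := by positivity
  have h2 : (0:ℝ) < 1 + x ^ 2 := by positivity
  have h3 : (0:ℝ) < 1 + (x / lam) ^ 2 := by positivity
  field_simp
  linear_combination x ^ 2 * (lam - 1) * key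

/-- time component of the truncated scattering map.  With
`ξ_n = λⁿ ξ₀`, the series `∑_{n ∈ ℤ} [ 2a − 2a(λ+ξ_n²)²/((λ²+ξ_n²)(1+ξ_n²)) ]`
converges absolutely and its sum equals `2c`: the total defect between the
homoclinic flight lengths and the period-two flight length `2a` is twice the
focal half-distance. -/
theorem scattering_map_time_component
    (a b : ℝ) (hb : 0 < b) (hab : b < a)
    (c lam : ℝ) (hc : c = Real.sqrt (a ^ 2 - b ^ 2)) (hlam : lam = (a + c) / (a - c))
    (ξ₀ : ℝ) (hξ₀ : 0 < ξ₀) :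
    Summable (fun n : ℤ =>
      |2 * a - 2 * a * (lam + (lam ^ n * ξ₀) ^ 2) ^ 2 /
        ((lam ^ 2 + (lam ^ n * ξ₀) ^ 2) * (1 + (lam ^ n * ξ₀) ^ 2))|) ∧
    ∑' n : ℤ,
      (2 * a - 2 * a * (lam + (lam ^ n * ξ₀) ^ 2) ^ 2 /
        ((lam ^ 2 + (lam ^ n * ξ₀) ^ 2) * (1 + (lam ^ n * ξ₀) ^ 2)))
      = 2 * c := by
  have ha : 0 < a := hb.trans hab
  have hc0 : 0 < c := by
    rw [hc]; exact Real.sqrt_pos.mpr (by nlinarith)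
  have hc2 : c ^ 2 = a ^ 2 - b ^ 2 := by
    rw [hc]; exact Real.sq_sqrt (by nlinarith)
  have hca : c < a := by nlinarith
  have hac : (0:ℝ) < a - c := by linarith
  have hlam1 : 1 < lam := by
    rw [hlam, lt_div_iff₀ hac]; linarith
  have hlam0 : 0 < lam := by linarith
  have hlamne : lam ≠ 0 := ne_of_gt hlam0
  have key : a * (lam - 1) = c * (lam + 1) := by
    rw [hlam]
    field_simp
    ring
  -- the telescoping sequence
  set u : ℤ → ℝ := fun n => 2 * c / (1 + (lam ^ n * ξ₀) ^ 2) with hu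
  set F : ℤ → ℝ := fun n => 2 * a - 2 * a * (lam + (lam ^ n * ξ₀) ^ 2) ^ 2 /
        ((lam ^ 2 + (lam ^ n * ξ₀) ^ 2) * (1 + (lam ^ n * ξ₀) ^ 2)) with hF
  have hzsub : ∀ n : ℤ, lam ^ (n - 1) * ξ₀ = lam ^ n * ξ₀ / lam := by
    intro n
    rw [zpow_sub_one₀ hlamne]
    ring
  have hterm : ∀ n : ℤ, F n = u (n - 1) - u n := by
    intro n
    simp only [hF, hu, hzsub n]
    exact scat_aux a c lam (lam ^ n * ξ₀) hlam0 key
  -- nonnegativity of each term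
  have hnonneg : ∀ n : ℤ, 0 ≤ F n := by
    intro n
    rw [hterm n]
    have h1 : lam ^ (n - 1) ≤ lam ^ n := zpow_le_zpow_right₀ hlam1.le (by linarith)
    have h2 : (0:ℝ) < lam ^ (n - 1) := zpow_pos hlam0 _
    have h3 : (lam ^ (n - 1) * ξ₀) ^ 2 ≤ (lam ^ n * ξ₀) ^ 2 := by
      apply pow_le_pow_left₀ (by positivity)
      exact mul_le_mul_of_nonneg_right h1 hξ₀.le
    have h4 : (0:ℝ) < 1 + (lam ^ (n - 1) * ξ₀) ^ 2 := by positivity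
    have h5 : u n ≤ u (n - 1) := by
      apply div_le_div_of_nonneg_left (by linarith) h4 (by linarith)
    linarith
  -- the positive-index part
  have hfnat : HasSum (fun k : ℕ => F k) (u (-1)) := by
    rw [hasSum_iff_tendsto_nat_of_nonneg (fun k => hnonneg k)]
    have hsum : ∀ N : ℕ, ∑ k ∈ Finset.range N, F k = u (-1) - u ((N : ℤ) - 1) := by
      intro N
      have : ∀ k ∈ Finset.range N, F k =
          (fun m : ℕ => u ((m : ℤ) - 1)) k - (fun m : ℕ => u ((m : ℤ) - 1)) (k + 1) := by
        intro k _
        simp only [hterm (k : ℤ)]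
        push_cast
        ring_nf
      rw [Finset.sum_congr rfl this, Finset.sum_range_sub' (fun m : ℕ => u ((m : ℤ) - 1)) N]
      norm_num
    simp only [hsum]
    have htend : Filter.Tendsto (fun N : ℕ => u ((N : ℤ) - 1)) Filter.atTop (nhds 0) := by
      have hrw : ∀ N : ℕ, u ((N : ℤ) - 1) =
          2 * c / (1 + (lam ^ N * (ξ₀ / lam)) ^ 2) := by
        intro N
        simp only [hu, hzsub (N : ℤ), zpow_natCast]
        ring_nf
      simp only [hrw]
      apply Filter.Tendsto.div_atTop tendsto_const_nhds
      apply Filter.tendsto_atTop_add_const_left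
      have h1 : Filter.Tendsto (fun N : ℕ => lam ^ N * (ξ₀ / lam)) Filter.atTop Filter.atTop :=
        (tendsto_pow_atTop_atTop_of_one_lt hlam1).atTop_mul_const (by positivity)
      have := h1.atTop_mul_atTop₀ h1
      simpa [sq] using this
    have := (tendsto_const_nhds (x := u (-1)) (f := Filter.atTop (α := ℕ))).sub htend
    simpa using this
  -- the negative-index part
  have hgnat : HasSum (fun k : ℕ => F (Int.negSucc k)) (2 * c - u (-1)) := by
    rw [hasSum_iff_tendsto_nat_of_nonneg (fun k => hnonneg _)]
    have hsum : ∀ N : ℕ, ∑ k ∈ Finset.range N, F (Int.negSucc k)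
        = u (-(N : ℤ) - 1) - u (-1) := by
      intro N
      have : ∀ k ∈ Finset.range N, F (Int.negSucc k) =
          (fun m : ℕ => u (-(m : ℤ) - 1)) (k + 1) - (fun m : ℕ => u (-(m : ℤ) - 1)) k := by
        intro k _
        have hns : (Int.negSucc k) = -(k : ℤ) - 1 := by
          simp [Int.negSucc_eq]; ring
        rw [hns, hterm (-(k : ℤ) - 1)]
        push_cast
        ring_nf
      rw [Finset.sum_congr rfl this, Finset.sum_range_sub (fun m : ℕ => u (-(m : ℤ) - 1)) N]
      norm_num
    simp only [hsum]
    have htend : Filter.Tendsto (fun N : ℕ => u (-(N : ℤ) - 1)) Filter.atTop (nhds (2 * c)) := by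
      have hrw : ∀ N : ℕ, u (-(N : ℤ) - 1) =
          2 * c / (1 + ((1 / lam) ^ N * (ξ₀ / lam)) ^ 2) := by
        intro N
        have : lam ^ (-(N : ℤ) - 1) = (1 / lam) ^ N * (1 / lam) := by
          rw [zpow_sub₀ hlamne, zpow_neg, zpow_natCast]
          field_simp
          rw [one_div_pow, mul_one_div_cancel (pow_ne_zero _ hlamne)]
        simp only [hu, this]
        ring_nf
      simp only [hrw]
      have h1 : Filter.Tendsto (fun N : ℕ => (1 / lam) ^ N) Filter.atTop (nhds 0) := by
        apply tendsto_pow_atTop_nhds_zero_of_lt_one (by positivity)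
        rw [div_lt_one hlam0]; linarith
      have h2 : Filter.Tendsto (fun N : ℕ => 1 + ((1 / lam) ^ N * (ξ₀ / lam)) ^ 2)
          Filter.atTop (nhds 1) := by
        have := ((h1.mul_const (ξ₀ / lam)).pow 2).const_add 1
        simpa using this
      have := (tendsto_const_nhds (x := 2 * c) (f := Filter.atTop (α := ℕ))).div h2 one_ne_zero
      simpa [Pi.div_def] using this
    have := htend.sub_const (u (-1))
    simpa using this
  -- combine
  have hFeq : F = Int.rec (fun k : ℕ => F k) (fun k : ℕ => F (Int.negSucc k)) := by
    funext n
    cases n <;> rfl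
  have hhs : HasSum F (2 * c) := by
    rw [hFeq]
    have := hfnat.int_rec hgnat
    simpa using this
  constructor
  · have hs := hhs.summable
    have : (fun n : ℤ => |F n|) = F := by
      funext n
      exact abs_of_nonneg (hnonneg n)
    rw [show (fun n : ℤ =>
      |2 * a - 2 * a * (lam + (lam ^ n * ξ₀) ^ 2) ^ 2 /
        ((lam ^ 2 + (lam ^ n * ξ₀) ^ 2) * (1 + (lam ^ n * ξ₀) ^ 2))|) = fun n => |F n| from rfl,
      this]
    exact hs
  · exact hhs.tsum_eq
end
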